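/- arXiv:0711.3385 — 4 statements merged into one kernel-verified Lean document; each statement's English description precedes it below -/
import Mathlib

section
/- Assume that for each ℓ ∈ {1,…,n−1} and every j ∈ I_n with j > ℓ, the point Y^{{ℓ}} is below γ_j and every point y ∈ γ_ℓ ∩ π_1 ∩ ⋯ ∩ π_{ℓ−1} is on or below γ_j. Then the equilibrium Y^{{n}} (the point whose n-th coordinate is 1/a_{nn} and whose other coordinates are 0) is a global attractor. -/
open Filter Topology Set

noncomputable section

/-- `alphaLV a i x = Σ_j a i j * x j`. -/
def alphaLV {n : ℕ} (a : Fin n → Fin n → ℝ) (i : Fin n) (x : Fin n → ℝ) : ℝ :=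
  ∑ j, a i j * x j

/-- A solution of the Lotka–Volterra system `x_i' = b_i x_i (1 - α_i x)` on `[0,∞)`
with values in the nonnegative orthant. -/
def IsLVSolution {n : ℕ} (b : Fin n → ℝ) (a : Fin n → Fin n → ℝ)
    (x : ℝ → Fin n → ℝ) : Prop :=
  (∀ t ∈ Set.Ici (0:ℝ), ∀ i, 0 ≤ x t i) ∧
  (∀ t ∈ Set.Ici (0:ℝ), ∀ i,
    HasDerivWithinAt (fun s => x s i)
      (b i * x t i * (1 - alphaLV a i (x t))) (Set.Ici 0) t)

/-- An equilibrium of the Lotka–Volterra system in `ℝ^n_+`. -/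
def IsLVEquilibrium {n : ℕ} (b : Fin n → ℝ) (a : Fin n → Fin n → ℝ)
    (y : Fin n → ℝ) : Prop :=
  (∀ i, 0 ≤ y i) ∧ ∀ i, b i * y i * (1 - alphaLV a i y) = 0

/-- `y` is a global attractor: it is an equilibrium and every solution starting in
the open positive orthant converges to it. -/
def IsGlobalAttractor {n : ℕ} (b : Fin n → ℝ) (a : Fin n → Fin n → ℝ)
    (y : Fin n → ℝ) : Prop :=
  IsLVEquilibrium b a y ∧
  ∀ x : ℝ → Fin n → ℝ, IsLVSolution b a x → (∀ i, 0 < x 0 i) →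
    ∀ i, Tendsto (fun t => x t i) atTop (nhds (y i))

open Classical in
/-- The projection `u^J`: `u` on `J`, zero off `J`. -/
def projLV {n : ℕ} (u : Fin n → ℝ) (J : Set (Fin n)) : Fin n → ℝ :=
  fun i => if i ∈ J then u i else 0

open Classical in
/-- The vector `U` of (3.1), with the index set `I_n` replaced by `S`. -/
def Uvec {n : ℕ} (a : Fin n → Fin n → ℝ) (S : Set (Fin n)) (i : Fin n) : ℝ :=
  if ∃ j ∈ S, j ≠ i ∧ (a i i ≤ a j i ∨ a i j = 0) then (a i i)⁻¹
  else if (∀ j ∈ S, j ≠ i → a j i < a i i) ∧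
      (∀ j ∈ S, ∀ k ∈ S, j ≠ i → k ≠ i → a j k ≤ a i k) then 0
  else sSup {r | ∃ j ∈ S, ∃ k ∈ S, j ≠ i ∧ k ≠ i ∧ a i j < a k j ∧
      r = (a k j - a i j) / (a i i * a k j - a i j * a k i)}

/-- Condition `(C_k)` relative to a vector `U`: either `U^{I_n∖{k}}` is below `γ_k`,
or every point of `γ_k ∩ [0, U^{I_n∖{k}}]` is above `γ_j` for every `j ≠ k`. -/
def CondC {n : ℕ} (a : Fin n → Fin n → ℝ) (U : Fin n → ℝ) (k : Fin n) : Prop :=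
  alphaLV a k (projLV U (({k} : Set (Fin n))ᶜ)) < 1 ∨
  ∀ j, j ≠ k → ∀ x : Fin n → ℝ,
    (∀ i, 0 ≤ x i ∧ x i ≤ projLV U (({k} : Set (Fin n))ᶜ) i) →
    alphaLV a k x = 1 → 1 < alphaLV a j x

/-- Condition (3.7) for the pair `(i,j)` relative to a vector `U`. -/
def Cond37 {n : ℕ} (a : Fin n → Fin n → ℝ) (U : Fin n → ℝ) (i j : Fin n) : Prop :=
  max 0 (a i j / a j j * (1 - alphaLV a j (projLV U (({i, j} : Set (Fin n))ᶜ))))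
    < 1 - alphaLV a i (projLV U (({i, j} : Set (Fin n))ᶜ))

/-- The vector `Y = (1/a₁₁, …, 1/aₙₙ)`. -/
def Yvec {n : ℕ} (a : Fin n → Fin n → ℝ) : Fin n → ℝ := fun i => (a i i)⁻¹



lemma barrier_upper {g g' : ℝ → ℝ} {T m : ℝ}
    (hd : ∀ t, T ≤ t → HasDerivWithinAt g (g' t) (Ici T) t)
    (hneg : ∀ t, T ≤ t → m ≤ g t → g' t < 0) :
    ∀ t, T ≤ t → g t ≤ max (g T) m := by
  intro t₁ ht₁
  by_contra hgt
  push_neg at hgt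
  have hcont : ContinuousOn g (Ici T) := fun s hs => (hd s hs).continuousWithinAt
  set c := max (g T) m with hc
  set S := Icc T t₁ ∩ g ⁻¹' (Iic c) with hS
  have hTmem : T ∈ S := ⟨⟨le_refl T, ht₁⟩, by exact le_max_left (g T) m⟩
  have hne : S.Nonempty := ⟨T, hTmem⟩
  have hbdd : BddAbove S := ⟨t₁, fun s hs => hs.1.2⟩
  have hclosed : IsClosed S :=
    (hcont.mono Icc_subset_Ici_self).preimage_isClosed_of_isClosed isClosed_Icc isClosed_Iic
  set s₀ := sSup S with hs₀
  have hs₀S : s₀ ∈ S := hclosed.csSup_mem hne hbdd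
  have hs₀T : T ≤ s₀ := hs₀S.1.1
  have hs₀t₁ : s₀ ≤ t₁ := hs₀S.1.2
  have hgs₀ : g s₀ ≤ c := hs₀S.2
  have hs₀lt : s₀ < t₁ := by
    rcases lt_or_eq_of_le hs₀t₁ with h1 | h1
    · exact h1
    · exfalso; rw [h1] at hgs₀; exact absurd hgt (not_lt.2 hgs₀)
  have hgtc : ∀ s, s₀ < s → s ≤ t₁ → c < g s := by
    intro s hs hst
    by_contra hle
    push_neg at hle
    have : s ∈ S := ⟨⟨le_trans hs₀T hs.le, hst⟩, hle⟩
    exact absurd (le_csSup hbdd this) (not_le.2 hs)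
  have hanti : StrictAntiOn g (Icc s₀ t₁) := by
    apply strictAntiOn_of_deriv_neg (convex_Icc _ _)
      (hcont.mono (fun y hy => le_trans hs₀T hy.1))
    intro s hs
    rw [interior_Icc] at hs
    have hTs : T < s := lt_of_le_of_lt hs₀T hs.1
    have hda : HasDerivAt g (g' s) s := (hd s hTs.le).hasDerivAt (Ici_mem_nhds hTs)
    rw [hda.deriv]
    exact hneg s hTs.le (le_trans (le_max_right _ _) (hgtc s hs.1 hs.2.le).le)
  have := hanti (left_mem_Icc.2 hs₀t₁) (right_mem_Icc.2 hs₀t₁) hs₀lt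
  exact absurd (lt_of_lt_of_le hgt (le_trans this.le hgs₀)) (lt_irrefl _)

lemma barrier_flee {g g' : ℝ → ℝ} {T m h : ℝ} (hh : 0 < h)
    (hd : ∀ t, T ≤ t → HasDerivWithinAt g (g' t) (Ici T) t)
    (hneg : ∀ t, T ≤ t → m ≤ g t → g' t ≤ -h) :
    ∃ T', T ≤ T' ∧ ∀ t, T' ≤ t → g t ≤ m := by
  have hcont : ContinuousOn g (Ici T) := fun s hs => (hd s hs).continuousWithinAt
  have hreach : ∃ t₂, T ≤ t₂ ∧ g t₂ ≤ m := by
    by_contra hno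
    push_neg at hno
    set φ : ℝ → ℝ := fun t => g t + h * t with hφ
    have hφanti : AntitoneOn φ (Ici T) := by
      apply antitoneOn_of_deriv_nonpos (convex_Ici T)
      · exact hcont.add (continuous_const.mul continuous_id).continuousOn
      · intro s hs
        rw [interior_Ici] at hs
        have hda : HasDerivAt g (g' s) s := (hd s hs.le).hasDerivAt (Ici_mem_nhds hs)
        exact ((hda.add ((hasDerivAt_id s).const_mul h)).differentiableAt).differentiableWithinAt
      · intro s hs
        rw [interior_Ici] at hs
        have hda : HasDerivAt g (g' s) s := (hd s hs.le).hasDerivAt (Ici_mem_nhds hs)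
        have hd2 : deriv φ s = g' s + h := by
          have h2 : HasDerivAt φ (g' s + h * 1) s := hda.add ((hasDerivAt_id s).const_mul h)
          simpa using h2.deriv
        rw [hd2]
        have := hneg s hs.le (hno s hs.le).le
        linarith
    have h1 : 0 < (g T - m) / h := div_pos (by linarith [hno T le_rfl]) hh
    set d := (g T - m) / h with hd1
    have hTt₀ : T ≤ T + d + 1 := by linarith
    have h2 := hφanti (mem_Ici.2 le_rfl) (mem_Ici.2 hTt₀) hTt₀
    simp only [hφ] at h2
    have h3 : h * d = g T - m := by rw [hd1]; field_simp
    have h4 := hno (T + d + 1) hTt₀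
    have h5 : h * (T + d + 1) = h * T + h * d + h := by ring
    linarith
  obtain ⟨t₂, hTt₂, hgt₂⟩ := hreach
  refine ⟨t₂, hTt₂, ?_⟩
  intro t ht
  have := barrier_upper (g' := g') (T := t₂) (m := m)
    (fun s hs => (hd s (le_trans hTt₂ hs)).mono (Ici_subset_Ici.2 hTt₂))
    (fun s hs hms => lt_of_le_of_lt (hneg s (le_trans hTt₂ hs) hms) (by linarith)) t ht
  rwa [max_eq_right hgt₂] at this

lemma barrier_lower {g g' : ℝ → ℝ} {T m : ℝ}
    (hd : ∀ t, T ≤ t → HasDerivWithinAt g (g' t) (Ici T) t)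
    (hpos : ∀ t, T ≤ t → g t ≤ m → 0 < g' t) :
    ∀ t, T ≤ t → min (g T) m ≤ g t := by
  intro t ht
  have hb := barrier_upper (g := fun s => -g s) (g' := fun s => -(g' s)) (T := T) (m := -m)
    (fun s hs => (hd s hs).neg)
    (fun s hs hms => by
      have hms' : -m ≤ -g s := hms
      have : g s ≤ m := by linarith
      show -(g' s) < 0
      linarith [hpos s hs this]) t ht
  have hb' : -g t ≤ max (-g T) (-m) := hb
  rw [max_neg_neg] at hb'
  linarith

lemma barrier_reach {g g' : ℝ → ℝ} {T m h : ℝ} (hh : 0 < h)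
    (hd : ∀ t, T ≤ t → HasDerivWithinAt g (g' t) (Ici T) t)
    (hpos : ∀ t, T ≤ t → g t ≤ m → h ≤ g' t) :
    ∃ T', T ≤ T' ∧ ∀ t, T' ≤ t → m ≤ g t := by
  obtain ⟨T', hTT', hT'⟩ := barrier_flee (g := fun s => -g s) (g' := fun s => -(g' s))
    (T := T) (m := -m) (h := h) hh
    (fun s hs => (hd s hs).neg)
    (fun s hs hms => by
      have hms' : -m ≤ -g s := hms
      have : g s ≤ m := by linarith
      show -(g' s) ≤ -h
      linarith [hpos s hs this])
  refine ⟨T', hTT', fun t ht => ?_⟩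
  have h2 : -g t ≤ -m := hT' t ht
  linarith

section Facts
variable {n : ℕ} {b : Fin n → ℝ} {a : Fin n → Fin n → ℝ}

lemma fact1 (hdiag : ∀ i, 0 < a i i)
    (h : ∀ l j : Fin n, l < j →
      alphaLV a j (projLV (Yvec a) ({l} : Set (Fin n))) < 1 ∧
      ∀ y : Fin n → ℝ, (∀ i, 0 ≤ y i) → alphaLV a l y = 1 →
        (∀ t : Fin n, t < l → y t = 0) → alphaLV a j y ≤ 1) :
    ∀ l j : Fin n, l < j → a j l < a l l := by
  intro l j hlj
  have h1 := (h l j hlj).1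
  have hsum : alphaLV a j (projLV (Yvec a) ({l} : Set (Fin n))) = a j l * (a l l)⁻¹ := by
    unfold alphaLV projLV Yvec
    rw [Finset.sum_eq_single l]
    · rw [if_pos (Set.mem_singleton l)]
    · intro k _ hkl
      rw [if_neg (by simp [hkl]), mul_zero]
    · intro hl; exact absurd (Finset.mem_univ l) hl
  rw [hsum, ← div_eq_mul_inv, div_lt_one (hdiag l)] at h1
  exact h1

lemma fact2 (hdiag : ∀ i, 0 < a i i) (hnn : ∀ i j, 0 ≤ a i j)
    (h : ∀ l j : Fin n, l < j →
      alphaLV a j (projLV (Yvec a) ({l} : Set (Fin n))) < 1 ∧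
      ∀ y : Fin n → ℝ, (∀ i, 0 ≤ y i) → alphaLV a l y = 1 →
        (∀ t : Fin n, t < l → y t = 0) → alphaLV a j y ≤ 1) :
    ∀ l j k : Fin n, l < j → l ≤ k → a j k ≤ a l k := by
  intro l j k hlj hlk
  rcases eq_or_lt_of_le hlk with hkl | hkl
  · rw [← hkl]; exact (fact1 hdiag h l j hlj).le
  -- now l < k
  have hlnek : l ≠ k := ne_of_lt hkl
  by_cases hz : a l k = 0
  · -- show a j k ≤ a l k = 0
    by_contra hgt
    push_neg at hgt
    rw [hz] at hgt
    have hjk : 0 < a j k := hgt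
    set s : ℝ := 2 / a j k with hs
    set y : Fin n → ℝ := fun m => if m = l then (a l l)⁻¹ else if m = k then s else 0 with hy
    have hy0 : ∀ m, 0 ≤ y m := by
      intro m; rw [hy]
      dsimp only
      split
      · exact inv_nonneg.2 (hdiag l).le
      · split
        · exact div_nonneg (by norm_num) hjk.le
        · exact le_rfl
    have hsum : ∀ i, alphaLV a i y = a i l * (a l l)⁻¹ + a i k * s := by
      intro i
      unfold alphaLV
      have hterm : ∀ m : Fin n, a i m * y m =
          (if m = l then a i l * (a l l)⁻¹ else 0) + (if m = k then a i k * s else 0) := by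
        intro m
        rw [hy]; dsimp only
        by_cases h1 : m = l
        · subst h1; simp [hlnek]
        · by_cases h2 : m = k
          · subst h2; simp [h1]
          · simp [h1, h2]
      rw [Finset.sum_congr rfl (fun m _ => hterm m), Finset.sum_add_distrib,
        Finset.sum_ite_eq' Finset.univ l, Finset.sum_ite_eq' Finset.univ k]
      simp
    have hαl : alphaLV a l y = 1 := by
      rw [hsum, hz, mul_inv_cancel₀ (ne_of_gt (hdiag l))]; ring
    have hzero : ∀ t : Fin n, t < l → y t = 0 := by
      intro t htl
      rw [hy]; dsimp only
      rw [if_neg (ne_of_lt htl), if_neg (ne_of_lt (lt_trans htl hkl))]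
    have h2 := (h l j hlj).2 y hy0 hαl hzero
    rw [hsum] at h2
    have h3 : a j k * s = 2 := by rw [hs]; field_simp
    have h4 : 0 ≤ a j l * (a l l)⁻¹ := mul_nonneg (hnn j l) (inv_nonneg.2 (hdiag l).le)
    linarith
  · have hpos : 0 < a l k := lt_of_le_of_ne (hnn l k) (Ne.symm hz)
    set y : Fin n → ℝ := fun m => if m = k then (a l k)⁻¹ else 0 with hy
    have hy0 : ∀ m, 0 ≤ y m := by
      intro m; rw [hy]; dsimp only; split
      · exact inv_nonneg.2 hpos.le
      · exact le_rfl
    have hsum : ∀ i, alphaLV a i y = a i k * (a l k)⁻¹ := by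
      intro i
      unfold alphaLV
      have hterm : ∀ m : Fin n, a i m * y m = if m = k then a i k * (a l k)⁻¹ else 0 := by
        intro m
        rw [hy]; dsimp only
        by_cases h1 : m = k
        · subst h1; simp
        · simp [h1]
      rw [Finset.sum_congr rfl (fun m _ => hterm m), Finset.sum_ite_eq' Finset.univ k]
      simp
    have hαl : alphaLV a l y = 1 := by
      rw [hsum, mul_inv_cancel₀ (ne_of_gt hpos)]
    have hzero : ∀ t : Fin n, t < l → y t = 0 := by
      intro t htl
      rw [hy]; dsimp only
      rw [if_neg (ne_of_lt (lt_trans htl hkl))]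
    have h2 := (h l j hlj).2 y hy0 hαl hzero
    rw [hsum, ← div_eq_mul_inv, div_le_one hpos] at h2
    exact h2

end Facts


section Sol
variable {n : ℕ} {b : Fin n → ℝ} {a : Fin n → Fin n → ℝ} {x : ℝ → Fin n → ℝ}

lemma sol_contOn (hsol : IsLVSolution b a x) (i : Fin n) :
    ContinuousOn (fun t => x t i) (Ici 0) :=
  fun s hs => (hsol.2 s hs i).continuousWithinAt

lemma sol_hasDerivAt (hsol : IsLVSolution b a x) (i : Fin n) {t : ℝ} (ht : 0 < t) :
    HasDerivAt (fun s => x s i) (b i * x t i * (1 - alphaLV a i (x t))) t :=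
  (hsol.2 t ht.le i).hasDerivAt (Ici_mem_nhds ht)

lemma sol_pos (hsol : IsLVSolution b a x) (hx0 : ∀ i, 0 < x 0 i) :
    ∀ (i : Fin n) (t : ℝ), 0 ≤ t → 0 < x t i := by
  intro i t ht
  have hcx : ∀ k, Continuous fun s : ℝ => x (max s 0) k := by
    intro k
    rw [continuous_iff_continuousAt]
    intro s
    have hmax : Continuous fun s : ℝ => max s 0 := continuous_id.max continuous_const
    have h1 : ContinuousWithinAt (fun t => x t k) (Ici 0) (max s 0) :=
      sol_contOn hsol k _ (mem_Ici.2 (le_max_right _ _))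
    have := ContinuousWithinAt.comp (g := fun t => x t k) (f := fun u : ℝ => max u 0)
      (s := (univ : Set ℝ)) (t := Ici (0:ℝ)) h1 hmax.continuousAt.continuousWithinAt
      (fun u _ => le_max_right u 0)
    rwa [continuousWithinAt_univ] at this
  set f : ℝ → ℝ := fun s => b i * (1 - alphaLV a i (x (max s 0))) with hf
  have hfc : Continuous f := by
    apply continuous_const.mul
    apply continuous_const.sub
    unfold alphaLV
    exact continuous_finset_sum _ (fun k _ => continuous_const.mul (hcx k))
  set F : ℝ → ℝ := fun t => ∫ s in (0:ℝ)..t, f s with hF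
  have hFd : ∀ t : ℝ, HasDerivAt F (f t) t := fun t =>
    intervalIntegral.integral_hasDerivAt_right (hfc.intervalIntegrable _ _)
      (hfc.stronglyMeasurableAtFilter _ _) hfc.continuousAt
  set g : ℝ → ℝ := fun t => x t i * Real.exp (-F t) with hg
  have hgd : ∀ s ∈ Ico (0:ℝ) t, HasDerivWithinAt g 0 (Ici s) s := by
    intro s hs
    have hxd : HasDerivWithinAt (fun u => x u i)
        (b i * x s i * (1 - alphaLV a i (x s))) (Ici s) s :=
      (hsol.2 s hs.1 i).mono (Ici_subset_Ici.2 hs.1)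
    have hed : HasDerivAt (fun u => Real.exp (-F u)) (Real.exp (-F s) * -(f s)) s :=
      ((hFd s).neg).exp
    have := hxd.mul hed.hasDerivWithinAt
    have hfs : f s = b i * (1 - alphaLV a i (x s)) := by
      rw [hf]; simp [max_eq_left hs.1]
    refine this.congr_deriv ?_
    rw [hfs]; ring
  have hgc : ContinuousOn g (Icc 0 t) := by
    apply ContinuousOn.mul
    · exact (sol_contOn hsol i).mono Icc_subset_Ici_self
    · have hFc : Continuous F := continuous_iff_continuousAt.2 (fun s => (hFd s).continuousAt)
      exact (Real.continuous_exp.comp hFc.neg).continuousOn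
  have := constant_of_has_deriv_right_zero hgc (fun s hs => hgd s hs) t (right_mem_Icc.2 ht)
  have hgt : x t i * Real.exp (-F t) = x 0 i * Real.exp (-F 0) := this
  have hF0 : F 0 = 0 := by rw [hF]; simp
  rw [hF0] at hgt
  simp only [neg_zero, Real.exp_zero, mul_one] at hgt
  have he : 0 < Real.exp (-F t) := Real.exp_pos _
  nlinarith [hx0 i, he, hgt]

end Sol


lemma sol_le {n : ℕ} {b : Fin n → ℝ} {a : Fin n → Fin n → ℝ} {x : ℝ → Fin n → ℝ}
    (hb : ∀ i, 0 < b i) (hdiag : ∀ i, 0 < a i i) (hnn : ∀ i j, 0 ≤ a i j)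
    (hsol : IsLVSolution b a x) :
    ∀ (i : Fin n) (t : ℝ), 0 ≤ t → x t i ≤ max (x 0 i) (2 / a i i) := by
  intro i t ht
  refine barrier_upper (g := fun s => x s i)
    (g' := fun s => b i * x s i * (1 - alphaLV a i (x s))) (T := 0) (m := 2 / a i i)
    (fun s hs => hsol.2 s hs i) ?_ t ht
  intro s hs hm
  have h2a : 0 < 2 / a i i := div_pos two_pos (hdiag i)
  have hxp : 0 < x s i := lt_of_lt_of_le h2a hm
  have hα : 2 ≤ alphaLV a i (x s) := by
    have hsingle : a i i * x s i ≤ alphaLV a i (x s) := by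
      unfold alphaLV
      exact Finset.single_le_sum (f := fun k => a i k * x s k)
        (fun k _ => mul_nonneg (hnn i k) (hsol.1 s hs k)) (Finset.mem_univ i)
    have h2 : 2 ≤ x s i * a i i := (div_le_iff₀ (hdiag i)).1 hm
    nlinarith
  exact mul_neg_of_pos_of_neg (mul_pos (hb i) hxp) (by linarith)

lemma rpow_inv_cancel_right {y c : ℝ} (hy : 0 < y) (hc : c ≠ 0) : (y ^ c⁻¹) ^ c = y := by
  rw [← Real.rpow_mul hy.le, inv_mul_cancel₀ hc, Real.rpow_one]

lemma extinct {n : ℕ} {b : Fin n → ℝ} {a : Fin n → Fin n → ℝ} {x : ℝ → Fin n → ℝ}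
    (hb : ∀ i, 0 < b i) (hdiag : ∀ i, 0 < a i i) (hnn : ∀ i j, 0 ≤ a i j)
    (hsol : IsLVSolution b a x) (hx0 : ∀ i, 0 < x 0 i)
    (f1 : ∀ l j : Fin n, l < j → a j l < a l l)
    (f2 : ∀ l j k : Fin n, l < j → l ≤ k → a j k ≤ a l k) :
    ∀ l : Fin n, (l : ℕ) < n - 1 → Tendsto (fun t => x t l) atTop (nhds 0) := by
  classical
  have hpos := sol_pos hsol hx0
  obtain ⟨M, hMdef⟩ : ∃ w : Fin n → ℝ, w = fun i => max (x 0 i) (2 / a i i) := ⟨_, rfl⟩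
  have hM : ∀ (i : Fin n) (t : ℝ), 0 ≤ t → x t i ≤ M i := by
    intro i t ht; rw [hMdef]; exact sol_le hb hdiag hnn hsol i t ht
  -- constants
  obtain ⟨Abar, hAbardef⟩ : ∃ w : ℝ, w = 1 + ∑ j, ∑ k, a j k := ⟨_, rfl⟩
  have hAbar : ∀ j k, a j k ≤ Abar := by
    intro j k
    have h1 : a j k ≤ ∑ k', a j k' :=
      Finset.single_le_sum (fun k' _ => hnn j k') (Finset.mem_univ k)
    have h2 : ∑ k', a j k' ≤ ∑ j', ∑ k', a j' k' :=
      Finset.single_le_sum (f := fun j' => ∑ k', a j' k')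
        (fun j' _ => Finset.sum_nonneg fun k' _ => hnn j' k') (Finset.mem_univ j)
    have h3 : (0:ℝ) ≤ ∑ j', ∑ k', a j' k' :=
      Finset.sum_nonneg fun j' _ => Finset.sum_nonneg fun k' _ => hnn j' k'
    rw [hAbardef]
    linarith
  have hAbar1 : (1:ℝ) ≤ Abar := by
    have h3 : (0:ℝ) ≤ ∑ j', ∑ k', a j' k' :=
      Finset.sum_nonneg fun j' _ => Finset.sum_nonneg fun k' _ => hnn j' k'
    rw [hAbardef]; linarith
  have hAbar0 : (0:ℝ) < Abar := lt_of_lt_of_le one_pos hAbar1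
  -- strong induction
  suffices H : ∀ m : ℕ, ∀ l : Fin n, (l : ℕ) = m → (l : ℕ) < n - 1 →
      Tendsto (fun t => x t l) atTop (nhds 0) by
    exact fun l hl => H l.val l rfl hl
  intro m
  induction m using Nat.strong_induction_on with
  | _ m IH =>
  rintro l rfl hl
  -- the top species
  have hnpos : 0 < n := l.pos
  obtain ⟨e, hedef⟩ : ∃ w : Fin n, w = ⟨n - 1, by omega⟩ := ⟨_, rfl⟩
  have hle : l < e := by
    rw [hedef, Fin.lt_def]; exact hl
  have hIH : ∀ k : Fin n, k < l → Tendsto (fun t => x t k) atTop (nhds 0) := by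
    intro k hk
    have hk' : (k:ℕ) < (l:ℕ) := hk
    exact IH k.val hk' k rfl (by omega)
  obtain ⟨Jlt, hJlt⟩ : ∃ w : Finset (Fin n), w = Finset.univ.filter (fun k => k < l) := ⟨_, rfl⟩
  obtain ⟨Jgt, hJgt⟩ : ∃ w : Finset (Fin n), w = Finset.univ.filter (fun k => l < k) := ⟨_, rfl⟩
  have he_mem : e ∈ Jgt := by
    rw [hJgt, Finset.mem_filter]; exact ⟨Finset.mem_univ e, hle⟩
  obtain ⟨z, hzdef⟩ : ∃ w : ℝ → ℝ, w = fun t => ∑ k ∈ Jlt, x t k := ⟨_, rfl⟩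
  have hz : Tendsto z atTop (nhds 0) := by
    have h1 := tendsto_finset_sum (f := fun k t => x t k) (a := fun _ => (0:ℝ)) Jlt
      (fun k hk => hIH k (by rw [hJlt, Finset.mem_filter] at hk; exact hk.2))
    rw [hzdef]
    simpa using h1
  have hznn : ∀ t, 0 ≤ t → 0 ≤ z t := by
    intro t ht; rw [hzdef]; exact Finset.sum_nonneg fun k _ => (hpos k t ht).le
  have hzev : ∀ ε : ℝ, 0 < ε → ∃ T, 1 ≤ T ∧ ∀ t, T ≤ t → z t ≤ ε := by
    intro ε hε
    obtain ⟨N, hN⟩ := Metric.tendsto_atTop.1 hz ε hε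
    refine ⟨max N 1, le_max_right _ _, fun t ht => ?_⟩
    have := hN t (le_trans (le_max_left _ _) ht)
    rw [Real.dist_eq, sub_zero] at this
    exact (abs_lt.1 this).2.le
  -- xi and P, Q
  obtain ⟨ξ, hξdef⟩ : ∃ w : Fin n → ℝ → ℝ, w = fun j t => x t j ^ (b j)⁻¹ := ⟨_, rfl⟩
  have hξpos : ∀ j (t : ℝ), 0 ≤ t → 0 < ξ j t := by
    intro j t ht; rw [hξdef]; exact Real.rpow_pos_of_pos (hpos j t ht) _
  have hξx : ∀ j (t : ℝ), 0 ≤ t → x t j = (ξ j t) ^ (b j) := by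
    intro j t ht
    rw [hξdef]
    exact (rpow_inv_cancel_right (hpos j t ht) (ne_of_gt (hb j))).symm
  obtain ⟨P, hPdef⟩ : ∃ w : ℝ → ℝ, w = fun t => ∑ j ∈ Jgt, ξ j t := ⟨_, rfl⟩
  obtain ⟨Q, hQdef⟩ : ∃ w : ℝ → ℝ, w = fun t => ξ l t + P t := ⟨_, rfl⟩
  have hPpos : ∀ t : ℝ, 0 ≤ t → 0 < P t := by
    intro t ht; rw [hPdef]
    exact Finset.sum_pos' (fun j _ => (hξpos j t ht).le) ⟨e, he_mem, hξpos e t ht⟩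
  have hQpos : ∀ t : ℝ, 0 ≤ t → 0 < Q t := by
    intro t ht; rw [hQdef]; exact add_pos (hξpos l t ht) (hPpos t ht)
  obtain ⟨PM, hPMdef⟩ : ∃ w : ℝ, w = ∑ j ∈ Jgt, M j ^ (b j)⁻¹ := ⟨_, rfl⟩
  have hPM : ∀ t : ℝ, 0 ≤ t → P t ≤ PM := by
    intro t ht
    rw [hPdef, hPMdef]
    apply Finset.sum_le_sum
    intro j _
    simp only [hξdef, hMdef]
    refine Real.rpow_le_rpow (hpos j t ht).le ?_ (inv_nonneg.2 (hb j).le)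
    have h9 := hM j t ht
    rw [hMdef] at h9
    exact h9
  -- derivatives
  obtain ⟨αf, hαfdef⟩ : ∃ w : Fin n → ℝ → ℝ, w = fun i t => alphaLV a i (x t) := ⟨_, rfl⟩
  have hξd : ∀ j (t : ℝ), 0 < t → HasDerivAt (ξ j) (ξ j t * (1 - αf j t)) t := by
    intro j t ht
    have hxp := hpos j t ht.le
    have h1 := (sol_hasDerivAt hsol j ht).rpow_const (p := (b j)⁻¹) (Or.inl (ne_of_gt hxp))
    rw [hξdef, hαfdef]
    convert h1 using 1
    rw [Real.rpow_sub_one (ne_of_gt hxp)]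
    have hbj : b j ≠ 0 := ne_of_gt (hb j)
    have hxj : x t j ≠ 0 := ne_of_gt hxp
    field_simp [hξdef]
  obtain ⟨PD, hPDdef⟩ : ∃ w : ℝ → ℝ, w = fun t => ∑ j ∈ Jgt, ξ j t * (1 - αf j t) := ⟨_, rfl⟩
  have hPd : ∀ t : ℝ, 0 < t → HasDerivAt P (PD t) t := by
    intro t ht; rw [hPdef, hPDdef]
    exact HasDerivAt.fun_sum (fun j _ => hξd j t ht)
  obtain ⟨QD, hQDdef⟩ : ∃ w : ℝ → ℝ, w = fun t => ξ l t * (1 - αf l t) + PD t := ⟨_, rfl⟩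
  have hQd : ∀ t : ℝ, 0 < t → HasDerivAt Q (QD t) t := by
    intro t ht; rw [hQdef, hQDdef]
    exact (hξd l t ht).add (hPd t ht)
  -- gamma
  obtain ⟨j0, hj0mem, hj0min⟩ := Finset.exists_min_image Jgt (fun j => a l l - a j l) ⟨e, he_mem⟩
  obtain ⟨γ, hγdef⟩ : ∃ w : ℝ, w = a l l - a j0 l := ⟨_, rfl⟩
  have hlj0 : l < j0 := by rw [hJgt, Finset.mem_filter] at hj0mem; exact hj0mem.2
  have hγpos : 0 < γ := by rw [hγdef]; exact sub_pos.2 (f1 l j0 hlj0)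
  -- key per-j comparison
  have hαdiff : ∀ j ∈ Jgt, ∀ t : ℝ, 0 ≤ t → αf j t ≤ αf l t - γ * x t l + Abar * z t := by
    intro j hj t ht
    have hlj : l < j := by rw [hJgt, Finset.mem_filter] at hj; exact hj.2
    have hdiffsum : αf l t - αf j t = ∑ k, (a l k - a j k) * x t k := by
      simp only [hαfdef, alphaLV]
      rw [← Finset.sum_sub_distrib]
      exact Finset.sum_congr rfl fun k _ => by ring
    have hsplit := Finset.sum_filter_add_sum_filter_not Finset.univ (fun k => k < l)
      (fun k => (a l k - a j k) * x t k)
    have hlow : -(Abar * z t) ≤ ∑ k ∈ Finset.univ.filter (fun k => k < l),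
        (a l k - a j k) * x t k := by
      have h1 : ∀ k ∈ Jlt, -(Abar * x t k) ≤ (a l k - a j k) * x t k := by
        intro k _
        have h2 : -(Abar) ≤ a l k - a j k := by
          have := hAbar j k; have := hnn l k; linarith
        have := mul_le_mul_of_nonneg_right h2 (hpos k t ht).le
        linarith
      have hz1 : -(Abar * z t) = ∑ k ∈ Jlt, -(Abar * x t k) := by
        simp [hzdef, Finset.mul_sum]
      rw [← hJlt, hz1]
      exact Finset.sum_le_sum h1
    have hhigh : γ * x t l ≤ ∑ k ∈ Finset.univ.filter (fun k => ¬ k < l),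
        (a l k - a j k) * x t k := by
      have hlmem : l ∈ Finset.univ.filter (fun k : Fin n => ¬ k < l) := by
        rw [Finset.mem_filter]; exact ⟨Finset.mem_univ l, lt_irrefl l⟩
      have h1 : (a l l - a j l) * x t l ≤ ∑ k ∈ Finset.univ.filter (fun k => ¬ k < l),
          (a l k - a j k) * x t k := by
        apply Finset.single_le_sum (f := fun k => (a l k - a j k) * x t k) ?_ hlmem
        intro k hk
        rw [Finset.mem_filter] at hk
        have hlk : l ≤ k := le_of_not_gt hk.2
        exact mul_nonneg (sub_nonneg.2 (f2 l j k hlj hlk)) (hpos k t ht).le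
      have h2 : γ ≤ a l l - a j l := by rw [hγdef]; exact hj0min j hj
      have h3 := mul_le_mul_of_nonneg_right h2 (hpos l t ht).le
      linarith
    have h4 : γ * x t l - Abar * z t ≤ αf l t - αf j t := by
      rw [hdiffsum, ← hsplit]; linarith
    linarith
  -- u and its derivative bound
  obtain ⟨u, hudef⟩ : ∃ w : ℝ → ℝ, w = fun t => (b l)⁻¹ * Real.log (x t l) - Real.log (P t) := ⟨_, rfl⟩
  set uD : ℝ → ℝ := fun t =>
    (b l)⁻¹ * ((b l * x t l * (1 - αf l t)) / x t l) - PD t / P t with huDdef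
  have hud : ∀ t : ℝ, 0 < t → HasDerivAt u (uD t) t := by
    intro t ht
    rw [hudef, huDdef]
    simp only [hαfdef]
    have h1 : HasDerivAt (fun s => Real.log (x s l))
        ((b l * x t l * (1 - alphaLV a l (x t))) / x t l) t :=
      (sol_hasDerivAt hsol l ht).log (ne_of_gt (hpos l t ht.le))
    have h2 : HasDerivAt (fun s => Real.log (P s)) (PD t / P t) t :=
      (hPd t ht).log (ne_of_gt (hPpos t ht.le))
    exact (h1.const_mul _).sub h2
  have huD_le : ∀ t : ℝ, 0 < t → uD t ≤ -(γ * x t l) + Abar * z t := by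
    intro t ht
    have hxl := hpos l t ht.le
    have hP := hPpos t ht.le
    have e1 : (b l)⁻¹ * ((b l * x t l * (1 - αf l t)) / x t l) = 1 - αf l t := by
      have hbl : b l ≠ 0 := ne_of_gt (hb l)
      have hxl' : x t l ≠ 0 := ne_of_gt hxl
      field_simp
    obtain ⟨W, hWdef⟩ : ∃ w : ℝ, w = (1 - αf l t) + γ * x t l - Abar * z t := ⟨_, rfl⟩
    have e2 : P t * W ≤ PD t := by
      have hPW : P t * W = ∑ j ∈ Jgt, ξ j t * W := by
        rw [hPdef]; rw [← Finset.sum_mul]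
      rw [hPW, hPDdef]
      apply Finset.sum_le_sum
      intro j hj
      apply mul_le_mul_of_nonneg_left ?_ (hξpos j t ht.le).le
      have := hαdiff j hj t ht.le
      rw [hWdef]; linarith
    have e3 : W ≤ PD t / P t := (le_div_iff₀ hP).2 (by linarith [e2])
    rw [huDdef]
    dsimp only
    rw [e1]
    rw [hWdef] at e3
    linarith
  -- persistence constants
  obtain ⟨jb, _, hjb⟩ := Finset.exists_min_image Finset.univ b ⟨l, Finset.mem_univ l⟩
  obtain ⟨bmin, hbmindef⟩ : ∃ w : ℝ, w = b jb := ⟨_, rfl⟩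
  have hbminpos : 0 < bmin := by rw [hbmindef]; exact hb jb
  have hbmin_le : ∀ k, bmin ≤ b k := by intro k; rw [hbmindef]; exact hjb k (Finset.mem_univ k)
  obtain ⟨δ₀, hδ₀def⟩ : ∃ w : ℝ, w = (2 * n * Abar)⁻¹ := ⟨_, rfl⟩
  have h2nA : (0:ℝ) < 2 * n * Abar := by
    have : (0:ℝ) < (n:ℝ) := Nat.cast_pos.2 hnpos
    positivity
  have hδ₀pos : 0 < δ₀ := by rw [hδ₀def]; exact inv_pos.2 h2nA
  have hδ₀le1 : δ₀ ≤ 1 := by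
    rw [hδ₀def]
    rw [inv_le_one₀ h2nA]
    have h1 : (1:ℝ) ≤ (n:ℝ) := by exact_mod_cast hnpos
    nlinarith
  obtain ⟨ρstar, hρstardef⟩ : ∃ w : ℝ, w = δ₀ ^ (bmin)⁻¹ := ⟨_, rfl⟩
  have hρpos : 0 < ρstar := by rw [hρstardef]; exact Real.rpow_pos_of_pos hδ₀pos _
  have hρb : ∀ k, ρstar ^ (b k) ≤ δ₀ := by
    intro k
    rw [hρstardef, ← Real.rpow_mul hδ₀pos.le]
    have h1 : (1:ℝ) ≤ bmin⁻¹ * b k := by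
      rw [← div_eq_inv_mul]
      exact (one_le_div hbminpos).2 (hbmin_le k)
    calc δ₀ ^ (bmin⁻¹ * b k) ≤ δ₀ ^ (1:ℝ) :=
          Real.rpow_le_rpow_of_exponent_ge hδ₀pos hδ₀le1 h1
      _ = δ₀ := Real.rpow_one _
  -- small alpha
  have hαsmall : ∀ (i : Fin n) (t : ℝ), 0 ≤ t → (∀ k, x t k ≤ δ₀) → αf i t ≤ 1/2 := by
    intro i t ht hsmall
    have h1 : ∀ k : Fin n, a i k * x t k ≤ Abar * δ₀ := by
      intro k
      apply mul_le_mul (hAbar i k) (hsmall k) (hpos k t ht).le hAbar0.le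
    have h2 : αf i t ≤ (n:ℝ) * (Abar * δ₀) := by
      rw [hαfdef]
      calc alphaLV a i (x t) ≤ ∑ _k : Fin n, Abar * δ₀ := Finset.sum_le_sum (fun k _ => h1 k)
        _ = (n:ℝ) * (Abar * δ₀) := by
            rw [Finset.sum_const, Finset.card_univ, Fintype.card_fin, nsmul_eq_mul]
    have h3 : (n:ℝ) * (Abar * δ₀) = 1/2 := by
      rw [hδ₀def]
      have hn0 : (n:ℝ) ≠ 0 := Nat.cast_ne_zero.2 hnpos.ne'
      field_simp
    linarith [h2, h3.le]
  -- persistence of Q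
  obtain ⟨Tz1, hTz1ge1, hTz1⟩ := hzev δ₀ hδ₀pos
  have hQtrig : ∀ t : ℝ, Tz1 ≤ t → Q t ≤ ρstar → 0 < QD t := by
    intro t ht hQle
    have ht0 : (0:ℝ) < t := lt_of_lt_of_le one_pos (le_trans hTz1ge1 ht)
    have hsmall : ∀ k, x t k ≤ δ₀ := by
      intro k
      by_cases hkl : k < l
      · have h1 : x t k ≤ z t := by
          rw [hzdef]
          exact Finset.single_le_sum (fun k' _ => (hpos k' t ht0.le).le)
            (by rw [hJlt, Finset.mem_filter]; exact ⟨Finset.mem_univ k, hkl⟩)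
        exact le_trans h1 (hTz1 t ht)
      · have hξk : ξ k t ≤ Q t := by
          rcases eq_or_lt_of_le (le_of_not_gt hkl) with h1 | h1
          · rw [hQdef, ← h1]
            have := (hPpos t ht0.le).le
            dsimp only
            linarith
          · have h2 : ξ k t ≤ P t := by
              rw [hPdef]
              exact Finset.single_le_sum (fun k' _ => (hξpos k' t ht0.le).le)
                (by rw [hJgt, Finset.mem_filter]; exact ⟨Finset.mem_univ k, h1⟩)
            rw [hQdef]
            have := (hξpos l t ht0.le).le
            dsimp only
            linarith
        have h3 : ξ k t ≤ ρstar := le_trans hξk hQle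
        calc x t k = (ξ k t) ^ (b k) := hξx k t ht0.le
          _ ≤ ρstar ^ (b k) :=
              Real.rpow_le_rpow (hξpos k t ht0.le).le h3 (hb k).le
          _ ≤ δ₀ := hρb k
    have hhalf : ∀ i : Fin n, (1:ℝ)/2 ≤ 1 - αf i t := by
      intro i
      have := hαsmall i t ht0.le hsmall
      linarith
    rw [hQDdef, hPDdef]
    dsimp only
    have h4 : ∀ j ∈ Jgt, ξ j t * (1/2) ≤ ξ j t * (1 - αf j t) :=
      fun j _ => mul_le_mul_of_nonneg_left (hhalf j) (hξpos j t ht0.le).le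
    have h5 : ξ l t * (1/2) ≤ ξ l t * (1 - αf l t) :=
      mul_le_mul_of_nonneg_left (hhalf l) (hξpos l t ht0.le).le
    have h6 : ∑ j ∈ Jgt, ξ j t * (1/2) ≤ ∑ j ∈ Jgt, ξ j t * (1 - αf j t) :=
      Finset.sum_le_sum h4
    have h7 : (∑ j ∈ Jgt, ξ j t * (1/2)) = P t * (1/2) := by
      rw [hPdef, ← Finset.sum_mul]
    have h8 : 0 < ξ l t * (1/2) + P t * (1/2) := by
      have := hξpos l t ht0.le; have := hPpos t ht0.le; linarith
    linarith
  have hQlow : ∀ t : ℝ, Tz1 ≤ t → min (Q Tz1) ρstar ≤ Q t := by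
    apply barrier_lower (g' := QD)
    · intro t ht
      have ht0 : (0:ℝ) < t := lt_of_lt_of_le one_pos (le_trans hTz1ge1 ht)
      exact (hQd t ht0).hasDerivWithinAt
    · exact fun t ht hq => hQtrig t ht hq
  obtain ⟨ρT, hρTdef⟩ : ∃ w : ℝ, w = min (Q Tz1) ρstar := ⟨_, rfl⟩
  have hρT : 0 < ρT := by
    rw [hρTdef]; exact lt_min (hQpos Tz1 (by linarith)) hρpos
  have hQlow' : ∀ t : ℝ, Tz1 ≤ t → ρT ≤ Q t := by
    intro t ht; rw [hρTdef]; exact hQlow t ht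
  -- identity x_l = exp(b_l u) P^{b_l}
  have hxlu : ∀ t : ℝ, 0 < t → x t l = Real.exp (b l * u t) * P t ^ (b l) := by
    intro t ht
    rw [Real.rpow_def_of_pos (hPpos t ht.le), ← Real.exp_add]
    have h1 : b l * u t + Real.log (P t) * b l = Real.log (x t l) := by
      have hbl : b l ≠ 0 := ne_of_gt (hb l)
      rw [hudef]
      field_simp
      ring
    rw [h1, Real.exp_log (hpos l t ht.le)]
  -- the crossing argument
  have hucross : ∀ K : ℝ, ∃ T', ∀ t : ℝ, T' ≤ t → u t ≤ K := by
    intro K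
    obtain ⟨q₁, hq₁def⟩ : ∃ w : ℝ, w = Real.exp (b l * (K - 1)) * (ρT / 2) ^ (b l) := ⟨_, rfl⟩
    obtain ⟨q₂, hq₂def⟩ : ∃ w : ℝ, w = (ρT / 2) ^ (b l) := ⟨_, rfl⟩
    have hq₂pos : 0 < q₂ := by rw [hq₂def]; exact Real.rpow_pos_of_pos (half_pos hρT) _
    have hq₁pos : 0 < q₁ := by
      rw [hq₁def, ← hq₂def]; exact mul_pos (Real.exp_pos _) hq₂pos
    obtain ⟨hsl, hsldef⟩ : ∃ w : ℝ, w = γ * min q₁ q₂ := ⟨_, rfl⟩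
    have hslpos : 0 < hsl := by rw [hsldef]; exact mul_pos hγpos (lt_min hq₁pos hq₂pos)
    obtain ⟨Th0, hTh0ge1, hTh0⟩ := hzev (hsl / (2 * Abar)) (div_pos hslpos (mul_pos two_pos hAbar0))
    obtain ⟨Th, hThdef⟩ : ∃ w : ℝ, w = max Th0 Tz1 := ⟨_, rfl⟩
    have hTh0le : Th0 ≤ Th := by rw [hThdef]; exact le_max_left _ _
    have hTz1le : Tz1 ≤ Th := by rw [hThdef]; exact le_max_right _ _
    have hThge1 : 1 ≤ Th := le_trans hTh0ge1 hTh0le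
    have htrig : ∀ t : ℝ, Th ≤ t → K - 1 ≤ u t → uD t ≤ -(hsl / 2) := by
      intro t ht hu
      have ht0 : (0:ℝ) < t := lt_of_lt_of_le one_pos (le_trans hThge1 ht)
      have hzle : Abar * z t ≤ hsl / 2 := by
        have h1 := hTh0 t (le_trans hTh0le ht)
        calc Abar * z t ≤ Abar * (hsl / (2 * Abar)) :=
              mul_le_mul_of_nonneg_left h1 hAbar0.le
          _ = hsl / 2 := by field_simp
      have hxll : min q₁ q₂ ≤ x t l := by
        by_cases hPc : ρT / 2 ≤ P t
        · have h1 : q₁ ≤ x t l := by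
            rw [hxlu t ht0, hq₁def]
            apply mul_le_mul
            · exact Real.exp_le_exp.2 (mul_le_mul_of_nonneg_left hu (hb l).le)
            · exact Real.rpow_le_rpow (half_pos hρT).le hPc (hb l).le
            · exact (Real.rpow_pos_of_pos (half_pos hρT) _).le
            · exact (Real.exp_pos _).le
          exact le_trans (min_le_left _ _) h1
        · push_neg at hPc
          have hQt : ρT ≤ Q t := hQlow' t (le_trans hTz1le ht)
          have hξl : ρT / 2 ≤ ξ l t := by
            rw [hQdef] at hQt
            dsimp only at hQt
            linarith
          have h1 : q₂ ≤ x t l := by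
            rw [hξx l t ht0.le, hq₂def]
            exact Real.rpow_le_rpow (half_pos hρT).le hξl (hb l).le
          exact le_trans (min_le_right _ _) h1
      have h2 : hsl ≤ γ * x t l := by
        rw [hsldef]
        exact mul_le_mul_of_nonneg_left hxll hγpos.le
      calc uD t ≤ -(γ * x t l) + Abar * z t := huD_le t ht0
        _ ≤ -hsl + hsl / 2 := add_le_add (neg_le_neg h2) hzle
        _ = -(hsl / 2) := by ring
    obtain ⟨T', _, hT'⟩ := barrier_flee (g := u) (g' := uD) (T := Th) (m := K - 1)
      (h := hsl / 2) (half_pos hslpos)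
      (fun t ht => (hud t (lt_of_lt_of_le one_pos (le_trans hThge1 ht))).hasDerivWithinAt)
      htrig
    exact ⟨T', fun t ht => by linarith [hT' t ht]⟩
  -- conclude
  have hutend : Tendsto u atTop atBot := by
    rw [tendsto_atBot]
    intro K
    obtain ⟨T', hT'⟩ := hucross K
    exact eventually_atTop.2 ⟨T', hT'⟩
  have hexp : Tendsto (fun t => Real.exp (b l * u t) * PM ^ (b l)) atTop (nhds 0) := by
    have h1 : Tendsto (fun t => b l * u t) atTop atBot :=
      Tendsto.const_mul_atBot (hb l) hutend
    have h2 : Tendsto (fun t => Real.exp (b l * u t)) atTop (nhds 0) :=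
      Real.tendsto_exp_atBot.comp h1
    simpa using h2.mul_const (PM ^ (b l))
  apply squeeze_zero' ?_ ?_ hexp
  · exact (eventually_ge_atTop (0:ℝ)).mono fun t ht => (hpos l t ht).le
  · apply (eventually_ge_atTop (1:ℝ)).mono
    intro t ht
    have ht0 : (0:ℝ) < t := lt_of_lt_of_le one_pos ht
    rw [hxlu t ht0]
    apply mul_le_mul_of_nonneg_left ?_ (Real.exp_pos _).le
    exact Real.rpow_le_rpow (hPpos t ht0.le).le (hPM t ht0.le) (hb l).le


lemma last_conv {n : ℕ} {b : Fin n → ℝ} {a : Fin n → Fin n → ℝ} {x : ℝ → Fin n → ℝ}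
    (hb : ∀ i, 0 < b i) (hdiag : ∀ i, 0 < a i i) (hnn : ∀ i j, 0 ≤ a i j)
    (hsol : IsLVSolution b a x) (hx0 : ∀ i, 0 < x 0 i) (e : Fin n)
    (hext : ∀ k : Fin n, k ≠ e → Tendsto (fun t => x t k) atTop (nhds 0)) :
    Tendsto (fun t => x t e) atTop (nhds ((a e e)⁻¹)) := by
  classical
  have hpos := sol_pos hsol hx0
  obtain ⟨ζ, hζdef⟩ : ∃ w : ℝ → ℝ, w = fun t => ∑ k ∈ Finset.univ.erase e, a e k * x t k :=
    ⟨_, rfl⟩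
  have hζ : Tendsto ζ atTop (nhds 0) := by
    have h1 := tendsto_finset_sum (f := fun k t => a e k * x t k)
      (a := fun _ => (0:ℝ)) (Finset.univ.erase e)
      (fun k hk => by
        have hk' : k ≠ e := Finset.ne_of_mem_erase hk
        simpa using (hext k hk').const_mul (a e k))
    rw [hζdef]
    simpa using h1
  have hζnn : ∀ t : ℝ, 0 ≤ t → 0 ≤ ζ t := by
    intro t ht; rw [hζdef]
    exact Finset.sum_nonneg fun k _ => mul_nonneg (hnn e k) (hpos k t ht).le
  have hα : ∀ t : ℝ, alphaLV a e (x t) = a e e * x t e + ζ t := by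
    intro t
    rw [hζdef]
    exact (Finset.add_sum_erase Finset.univ (fun k => a e k * x t k)
      (Finset.mem_univ e)).symm
  have hζev : ∀ ε : ℝ, 0 < ε → ∃ T : ℝ, 1 ≤ T ∧ ∀ t, T ≤ t → ζ t ≤ ε := by
    intro ε hε
    obtain ⟨N, hN⟩ := Metric.tendsto_atTop.1 hζ ε hε
    refine ⟨max N 1, le_max_right _ _, fun t ht => ?_⟩
    have := hN t (le_trans (le_max_left _ _) ht)
    rw [Real.dist_eq, sub_zero] at this
    exact (abs_lt.1 this).2.le
  rw [Metric.tendsto_atTop]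
  intro ε hε
  obtain ⟨ye, hyedef⟩ : ∃ w : ℝ, w = (a e e)⁻¹ := ⟨_, rfl⟩
  have hye : 0 < ye := by rw [hyedef]; exact inv_pos.2 (hdiag e)
  obtain ⟨η, hηdef⟩ : ∃ w : ℝ, w = min (ε/2) (ye/2) := ⟨_, rfl⟩
  have hη : 0 < η := by rw [hηdef]; exact lt_min (half_pos hε) (half_pos hye)
  have hηε : η ≤ ε/2 := by rw [hηdef]; exact min_le_left _ _
  have hηy : η ≤ ye/2 := by rw [hηdef]; exact min_le_right _ _
  have haey : a e e * ye = 1 := by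
    rw [hyedef]; exact mul_inv_cancel₀ (ne_of_gt (hdiag e))
  obtain ⟨Tζ, hTζ1, hTζ⟩ := hζev (a e e * η / 2) (by have := mul_pos (hdiag e) hη; linarith)
  have hDW : ∀ t : ℝ, Tζ ≤ t → HasDerivWithinAt (fun s => x s e)
      (b e * x t e * (1 - alphaLV a e (x t))) (Ici Tζ) t := by
    intro t ht
    have ht0 : (0:ℝ) < t := lt_of_lt_of_le one_pos (le_trans hTζ1 ht)
    exact (sol_hasDerivAt hsol e ht0).hasDerivWithinAt
  -- upper bound
  have hupper : ∃ T₁, Tζ ≤ T₁ ∧ ∀ t, T₁ ≤ t → x t e ≤ ye + η := by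
    refine barrier_flee (h := b e * (ye + η) * (a e e * η))
      (mul_pos (mul_pos (hb e) (by linarith)) (mul_pos (hdiag e) hη)) hDW ?_
    intro t ht hm
    have ht0 : (0:ℝ) < t := lt_of_lt_of_le one_pos (le_trans hTζ1 ht)
    have h1 : 1 - alphaLV a e (x t) ≤ -(a e e * η) := by
      rw [hα t]
      have h2 : a e e * (ye + η) ≤ a e e * x t e :=
        mul_le_mul_of_nonneg_left hm (hdiag e).le
      have h3 := hζnn t ht0.le
      nlinarith [haey]
    have h5 : b e * (ye + η) ≤ b e * x t e :=
      mul_le_mul_of_nonneg_left hm (hb e).le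
    have h6 : 0 ≤ b e * x t e := (mul_pos (hb e) (hpos e t ht0.le)).le
    have h7 : b e * x t e * (1 - alphaLV a e (x t)) ≤ b e * x t e * (-(a e e * η)) :=
      mul_le_mul_of_nonneg_left h1 h6
    have h8 : (0:ℝ) ≤ a e e * η := (mul_pos (hdiag e) hη).le
    have h9 : b e * (ye + η) * (a e e * η) ≤ b e * x t e * (a e e * η) :=
      mul_le_mul_of_nonneg_right h5 h8
    linarith
  -- lower barrier: positivity floor
  have hfloor : ∀ t, Tζ ≤ t → min (x Tζ e) (ye - η) ≤ x t e := by
    refine barrier_lower hDW ?_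
    intro t ht hm
    have ht0 : (0:ℝ) < t := lt_of_lt_of_le one_pos (le_trans hTζ1 ht)
    have h1 : a e e * η / 2 ≤ 1 - alphaLV a e (x t) := by
      rw [hα t]
      have h2 : a e e * x t e ≤ a e e * (ye - η) :=
        mul_le_mul_of_nonneg_left hm (hdiag e).le
      have h3 := hTζ t ht
      nlinarith [haey]
    have h4 : 0 < b e * x t e := mul_pos (hb e) (hpos e t ht0.le)
    have h5 : 0 < a e e * η / 2 := by have := mul_pos (hdiag e) hη; linarith
    nlinarith
  obtain ⟨ρe, hρedef⟩ : ∃ w : ℝ, w = min (x Tζ e) (ye - η) := ⟨_, rfl⟩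
  have hρe : 0 < ρe := by
    rw [hρedef]
    apply lt_min (hpos e Tζ (by linarith))
    linarith [hηy, hye]
  have hfloor' : ∀ t, Tζ ≤ t → ρe ≤ x t e := by
    intro t ht; rw [hρedef]; exact hfloor t ht
  -- lower bound reach
  have hlower : ∃ T₂, Tζ ≤ T₂ ∧ ∀ t, T₂ ≤ t → ye - η ≤ x t e := by
    refine barrier_reach (h := b e * ρe * (a e e * η / 2))
      (mul_pos (mul_pos (hb e) hρe) (by have := mul_pos (hdiag e) hη; linarith)) hDW ?_
    intro t ht hm
    have ht0 : (0:ℝ) < t := lt_of_lt_of_le one_pos (le_trans hTζ1 ht)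
    have h1 : a e e * η / 2 ≤ 1 - alphaLV a e (x t) := by
      rw [hα t]
      have h2 : a e e * x t e ≤ a e e * (ye - η) :=
        mul_le_mul_of_nonneg_left hm (hdiag e).le
      have h3 := hTζ t ht
      nlinarith [haey]
    have h5 : b e * ρe ≤ b e * x t e :=
      mul_le_mul_of_nonneg_left (hfloor' t ht) (hb e).le
    have h6 : 0 ≤ b e * x t e := (mul_pos (hb e) (hpos e t ht0.le)).le
    have h7 : b e * x t e * (a e e * η / 2) ≤ b e * x t e * (1 - alphaLV a e (x t)) :=
      mul_le_mul_of_nonneg_left h1 h6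
    have h8 : b e * ρe * (a e e * η / 2) ≤ b e * x t e * (a e e * η / 2) :=
      mul_le_mul_of_nonneg_right h5 (by have := mul_pos (hdiag e) hη; linarith)
    linarith
  obtain ⟨T₁, _, hT₁⟩ := hupper
  obtain ⟨T₂, _, hT₂⟩ := hlower
  refine ⟨max T₁ T₂, fun t ht => ?_⟩
  have ha := hT₁ t (le_trans (le_max_left _ _) ht)
  have hb' := hT₂ t (le_trans (le_max_right _ _) ht)
  rw [Real.dist_eq, ← hyedef, abs_lt]
  constructor
  · linarith
  · linarith

/-- Corollary 2.13: if for every `ℓ < j` the point `Y^{{ℓ}}` is below `γ_j` and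
every point of `γ_ℓ ∩ π_1 ∩ ⋯ ∩ π_{ℓ-1}` is on or below `γ_j`, then `Y^{{n}}`
is a global attractor. -/
theorem corollary2_13 (n : ℕ) (hn : 2 ≤ n) (b : Fin n → ℝ) (a : Fin n → Fin n → ℝ)
    (hb : ∀ i, 0 < b i) (hdiag : ∀ i, 0 < a i i) (hnn : ∀ i j, 0 ≤ a i j)
    (h : ∀ l j : Fin n, l < j →
      alphaLV a j (projLV (Yvec a) ({l} : Set (Fin n))) < 1 ∧
      ∀ y : Fin n → ℝ, (∀ i, 0 ≤ y i) → alphaLV a l y = 1 →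
        (∀ t : Fin n, t < l → y t = 0) → alphaLV a j y ≤ 1) :
    IsGlobalAttractor b a (projLV (Yvec a) {j : Fin n | (j : ℕ) = n - 1}) := by
  classical
  have f1 := fact1 hdiag h
  have f2 := fact2 hdiag hnn h
  have hproj_pos : ∀ i : Fin n, (i : ℕ) = n - 1 →
      projLV (Yvec a) {j : Fin n | (j : ℕ) = n - 1} i = (a i i)⁻¹ := by
    intro i hi
    unfold projLV Yvec
    exact if_pos hi
  have hproj_neg : ∀ i : Fin n, ¬ ((i : ℕ) = n - 1) →
      projLV (Yvec a) {j : Fin n | (j : ℕ) = n - 1} i = 0 := by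
    intro i hi
    unfold projLV
    exact if_neg hi
  constructor
  · constructor
    · intro i
      by_cases hi : (i : ℕ) = n - 1
      · rw [hproj_pos i hi]; exact inv_nonneg.2 (hdiag i).le
      · rw [hproj_neg i hi]
    · intro i
      by_cases hi : (i : ℕ) = n - 1
      · have hα : alphaLV a i (projLV (Yvec a) {j : Fin n | (j : ℕ) = n - 1}) = 1 := by
          unfold alphaLV
          rw [Finset.sum_eq_single i]
          · rw [hproj_pos i hi]
            exact mul_inv_cancel₀ (ne_of_gt (hdiag i))
          · intro k _ hk
            rw [hproj_neg k (fun hk2 => hk (Fin.ext (hk2.trans hi.symm))), mul_zero]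
          · intro hmem; exact absurd (Finset.mem_univ i) hmem
        rw [hα]
        ring
      · rw [hproj_neg i hi]
        ring
  · intro x hsol hx0 i
    have hn1 : n - 1 < n := by omega
    obtain ⟨e, hedef⟩ : ∃ w : Fin n, w = ⟨n - 1, hn1⟩ := ⟨_, rfl⟩
    have he' : (e : ℕ) = n - 1 := by rw [hedef]
    have hext : ∀ k : Fin n, (k : ℕ) < n - 1 → Tendsto (fun t => x t k) atTop (nhds 0) :=
      extinct hb hdiag hnn hsol hx0 f1 f2
    by_cases hi : (i : ℕ) = n - 1
    · rw [hproj_pos i hi]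
      have hi' : i = e := Fin.ext (hi.trans he'.symm)
      rw [hi']
      apply last_conv hb hdiag hnn hsol hx0 e
      intro k hk
      apply hext
      have hk2 : (k : ℕ) ≠ n - 1 := fun hc => hk (Fin.ext (hc.trans he'.symm))
      have := k.isLt
      omega
    · rw [hproj_neg i hi]
      apply hext
      have := i.isLt
      omega
end
end

section
/- Let J ⊆ I_n with |J| > 1. If condition (C_i) holds for all i ∈ J, then condition (3.7) holds for all i, j ∈ J with i ≠ j. -/
open Filter Topology Set

noncomputable section

section Aux

variable {n : ℕ} {a : Fin n → Fin n → ℝ}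

lemma alphaLV_mono (hnn : ∀ i j, 0 ≤ a i j) (i : Fin n)
    {x y : Fin n → ℝ} (h : ∀ k, x k ≤ y k) : alphaLV a i x ≤ alphaLV a i y :=
  Finset.sum_le_sum fun k _ => mul_le_mul_of_nonneg_left (h k) (hnn i k)

lemma alphaLV_smul (a : Fin n → Fin n → ℝ) (i : Fin n) (s : ℝ) (x : Fin n → ℝ) :
    alphaLV a i (fun k => s * x k) = s * alphaLV a i x := by
  simp [alphaLV, Finset.mul_sum, mul_left_comm]

lemma alphaLV_add_single (a : Fin n → Fin n → ℝ) (i j : Fin n) (v : Fin n → ℝ) (t : ℝ) :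
    alphaLV a i (fun k => v k + (if k = j then t else 0)) = alphaLV a i v + a i j * t := by
  simp [alphaLV, mul_add, Finset.sum_add_distrib, mul_ite, Finset.sum_ite_eq']

/-- The sup-set of `Uvec a univ` at index `i`. -/
def Uset (a : Fin n → Fin n → ℝ) (i : Fin n) : Set ℝ :=
  {r | ∃ j ∈ (univ : Set (Fin n)), ∃ k ∈ (univ : Set (Fin n)), j ≠ i ∧ k ≠ i ∧ a i j < a k j ∧
      r = (a k j - a i j) / (a i i * a k j - a i j * a k i)}

lemma Uset_bdd (a : Fin n → Fin n → ℝ) (i : Fin n) : BddAbove (Uset a i) := by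
  have h : Uset a i ⊆ Set.range (fun p : Fin n × Fin n =>
      (a p.2 p.1 - a i p.1) / (a i i * a p.2 p.1 - a i p.1 * a p.2 i)) := by
    rintro r ⟨j, -, k, -, -, -, -, rfl⟩
    exact ⟨(j, k), rfl⟩
  exact (Set.finite_range _).subset h |>.bddAbove

lemma Uset_elem_pos (hnn : ∀ i j, 0 ≤ a i j) {i : Fin n}
    (h1 : ∀ j, j ≠ i → a j i < a i i) {r : ℝ} (hr : r ∈ Uset a i) : 0 < r := by
  obtain ⟨j, -, k, -, hj, hk, hlt, rfl⟩ := hr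
  have hden : 0 < a i i * a k j - a i j * a k i := by
    have h2 : a k i < a i i := h1 k hk
    nlinarith [hnn i j, hnn k i]
  exact div_pos (by linarith) hden

/-- In the third case of `Uvec`, the first-case inequalities hold and the sup-set is
nonempty. -/
lemma third_case_facts {i : Fin n}
    (h1 : ¬ ∃ j ∈ (univ : Set (Fin n)), j ≠ i ∧ (a i i ≤ a j i ∨ a i j = 0))
    (h2 : ¬ ((∀ j ∈ (univ : Set (Fin n)), j ≠ i → a j i < a i i) ∧
      (∀ j ∈ (univ : Set (Fin n)), ∀ k ∈ (univ : Set (Fin n)), j ≠ i → k ≠ i → a j k ≤ a i k))) :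
    (∀ j, j ≠ i → a j i < a i i ∧ a i j ≠ 0) ∧ (Uset a i).Nonempty := by
  push_neg at h1
  simp only [mem_univ, forall_true_left, true_and] at h1 h2
  push_neg at h2
  refine ⟨fun j hj => h1 j hj, ?_⟩
  obtain ⟨j, k, hj, hk, hlt⟩ := h2 (fun j hj => (h1 j hj).1)
  exact ⟨_, k, mem_univ _, j, mem_univ _, hk, hj, hlt, rfl⟩

lemma Uvec_nonneg (hnn : ∀ i j, 0 ≤ a i j) (hdiag : ∀ i, 0 < a i i) (i : Fin n) :
    0 ≤ Uvec a Set.univ i := by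
  rw [Uvec]
  split_ifs with h1 h2
  · exact inv_nonneg.2 (hdiag i).le
  · exact le_refl 0
  · obtain ⟨hA, r, hr⟩ := third_case_facts h1 h2
    exact le_trans (Uset_elem_pos hnn (fun j hj => (hA j hj).1) hr).le
      (le_csSup (Uset_bdd a i) hr)

lemma keyIneq (hnn : ∀ i j, 0 ≤ a i j) {i j : Fin n} {x : Fin n → ℝ}
    (hx : ∀ k, 0 ≤ x k) (hi : 1 ≤ ∑ l, a i l * x l) (hj : ∑ l, a j l * x l ≤ 1)
    (c : ℝ) (hc : 0 ≤ c) (hcb : ∀ l, l ≠ j → a i l - a j l ≤ c * a j l) :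
    (a j j - a i j) * x j ≤ c * (1 - a j j * x j) := by
  have e1 : ∀ b : Fin n, (∑ l, a b l * x l) = a b j * x j + ∑ l ∈ Finset.univ.erase j, a b l * x l :=
    fun b => (Finset.add_sum_erase _ (fun l => a b l * x l) (Finset.mem_univ j)).symm
  have key : ∑ l ∈ Finset.univ.erase j, a i l * x l
      ≤ ∑ l ∈ Finset.univ.erase j, (a j l * x l + c * (a j l * x l)) := by
    refine Finset.sum_le_sum fun l hl => ?_
    have hlj : l ≠ j := (Finset.mem_erase.1 hl).1
    nlinarith [hcb l hlj, hx l, hnn j l]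
  have hEnn : 0 ≤ ∑ l ∈ Finset.univ.erase j, a j l * x l :=
    Finset.sum_nonneg fun l _ => mul_nonneg (hnn j l) (hx l)
  have hE : ∑ l ∈ Finset.univ.erase j, a j l * x l ≤ 1 - a j j * x j := by
    have := e1 j; linarith
  rw [Finset.sum_add_distrib, ← Finset.mul_sum] at key
  have := mul_le_mul_of_nonneg_left hE hc
  rw [e1 i, e1 j] at *
  linarith

/-- Lemma A: a point of `ℝ^n_+` on or above `γ_i` and on or below `γ_j` (`i ≠ j`)
has `x j ≤ U j`. -/
lemma lemA (hnn : ∀ i j, 0 ≤ a i j) (hdiag : ∀ i, 0 < a i i) {i j : Fin n} (hij : i ≠ j)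
    {x : Fin n → ℝ} (hx : ∀ k, 0 ≤ x k)
    (hi : 1 ≤ alphaLV a i x) (hj : alphaLV a j x ≤ 1) :
    x j ≤ Uvec a Set.univ j := by
  rw [alphaLV] at hi hj
  rw [Uvec]
  split_ifs with h1 h2
  · have hterm : a j j * x j ≤ ∑ l, a j l * x l :=
      Finset.single_le_sum (f := fun l => a j l * x l)
        (fun l _ => mul_nonneg (hnn j l) (hx l)) (Finset.mem_univ j)
    rw [← one_div, le_div_iff₀ (hdiag j)]
    nlinarith [hterm]
  · obtain ⟨hA, hB⟩ := h2
    have hc := keyIneq hnn hx hi hj 0 le_rfl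
      (fun l hl => by simpa using hB i (mem_univ i) l (mem_univ l) hij hl)
    have hij' : a i j < a j j := hA i (mem_univ i) hij
    nlinarith [hx j]
  · obtain ⟨hA, hne⟩ := third_case_facts h1 h2
    have hsup0 : 0 ≤ sSup (Uset a j) := by
      obtain ⟨r, hr⟩ := hne
      exact le_trans (Uset_elem_pos hnn (fun k hk => (hA k hk).1) hr).le
        (le_csSup (Uset_bdd a j) hr)
    have hajj : a i j < a j j := (hA i hij).1
    by_cases hL : ∀ l, l ≠ j → a i l ≤ a j l
    · have hc := keyIneq hnn hx hi hj 0 le_rfl (fun l hl => by simpa using hL l hl)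
      have : x j ≤ 0 := by nlinarith [hx j]
      exact le_trans this hsup0
    · push_neg at hL
      obtain ⟨l0, hl0j, hl0⟩ := hL
      set L : Finset (Fin n) := Finset.univ.filter (fun l => l ≠ j ∧ a j l < a i l) with hLdef
      have hLne : L.Nonempty := ⟨l0, by simp [hLdef, hl0j, hl0]⟩
      obtain ⟨l', hl'L, hl'max⟩ := Finset.exists_max_image L (fun l => (a i l - a j l) / a j l) hLne
      obtain ⟨hl'j, hl'lt⟩ : l' ≠ j ∧ a j l' < a i l' := by simpa [hLdef] using hl'L
      set p := a j l' with hp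
      set q := a i l' with hq
      have hppos : 0 < p := lt_of_le_of_ne (hnn j l') (Ne.symm (hA l' hl'j).2)
      set c := (q - p) / p with hcdef
      have hcpos : 0 < c := div_pos (by linarith) hppos
      have hcb : ∀ l, l ≠ j → a i l - a j l ≤ c * a j l := by
        intro l hl
        by_cases hll : a j l < a i l
        · have hplpos : 0 < a j l := lt_of_le_of_ne (hnn j l) (Ne.symm (hA l hl).2)
          have := hl'max l (by simp [hLdef, hl, hll])
          calc a i l - a j l = (a i l - a j l) / a j l * a j l := by field_simp
            _ ≤ c * a j l := mul_le_mul_of_nonneg_right this hplpos.le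
        · push_neg at hll
          have : (0:ℝ) ≤ c * a j l := mul_nonneg hcpos.le (hnn j l)
          linarith
      have hkey := keyIneq hnn hx hi hj c hcpos.le hcb
      have hpc : p * c = q - p := by
        rw [hcdef, mul_div_assoc']; exact mul_div_cancel_left₀ (q - p) hppos.ne'
      have hmul := mul_le_mul_of_nonneg_left hkey hppos.le
      have hmul2 : p * ((a j j - a i j) * x j) ≤ (q - p) * (1 - a j j * x j) := by
        calc p * ((a j j - a i j) * x j) ≤ p * (c * (1 - a j j * x j)) := hmul
          _ = (q - p) * (1 - a j j * x j) := by rw [← mul_assoc, hpc]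
      have hxj : x j * (a j j * q - p * a i j) ≤ q - p := by nlinarith [hmul2]
      have hD : 0 < a j j * q - p * a i j := by nlinarith [hx j, hdiag j, hnn i j]
      have hr : (q - p) / (a j j * q - p * a i j) ∈ Uset a j :=
        ⟨l', mem_univ _, i, mem_univ _, hl'j, hij, hl'lt, rfl⟩
      refine le_trans ?_ (le_csSup (Uset_bdd a j) hr)
      rw [le_div_iff₀ hD]
      exact hxj

lemma projLV_nonneg {U : Fin n → ℝ} (hU : ∀ k, 0 ≤ U k) (A : Set (Fin n)) (k : Fin n) :
    0 ≤ projLV U A k := by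
  rw [projLV]; split_ifs; exacts [hU k, le_rfl]

lemma projLV_le {U : Fin n → ℝ} (hU : ∀ k, 0 ≤ U k) {A B : Set (Fin n)} (h : A ⊆ B)
    (k : Fin n) : projLV U A k ≤ projLV U B k := by
  simp only [projLV]
  split_ifs with h1 h2
  exacts [le_rfl, absurd (h h1) h2, hU k, le_rfl]

lemma pair_compl_subset_left (i j : Fin n) :
    (({i, j} : Set (Fin n))ᶜ) ⊆ (({i} : Set (Fin n))ᶜ) :=
  Set.compl_subset_compl.2 (by intro x hx; simp only [mem_singleton_iff] at hx; simp [hx])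

lemma pair_compl_subset_right (i j : Fin n) :
    (({i, j} : Set (Fin n))ᶜ) ⊆ (({j} : Set (Fin n))ᶜ) :=
  Set.compl_subset_compl.2 (by intro x hx; simp only [mem_singleton_iff] at hx; simp [hx])

/-- Lemma B: if `(C_i)` and `(C_j)` hold then `U^{I∖{i,j}}` is below `γ_i`. -/
lemma lemB (hnn : ∀ i j, 0 ≤ a i j) {U : Fin n → ℝ} (hU : ∀ k, 0 ≤ U k)
    {i j : Fin n} (hij : i ≠ j) (hCi : CondC a U i) (hCj : CondC a U j) :
    alphaLV a i (projLV U (({i, j} : Set (Fin n))ᶜ)) < 1 := by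
  set v := projLV U (({i, j} : Set (Fin n))ᶜ) with hvdef
  by_contra hcon
  push_neg at hcon
  have hv0 : ∀ k, 0 ≤ v k := projLV_nonneg hU _
  have hvi : ∀ k, v k ≤ projLV U (({i} : Set (Fin n))ᶜ) k :=
    projLV_le hU (pair_compl_subset_left i j)
  have hvj : ∀ k, v k ≤ projLV U (({j} : Set (Fin n))ᶜ) k :=
    projLV_le hU (pair_compl_subset_right i j)
  rcases hCi with h | h
  · exact absurd (lt_of_le_of_lt (alphaLV_mono hnn i hvi) h) (not_lt.2 hcon)
  · have hpos : 0 < alphaLV a i v := lt_of_lt_of_le one_pos hcon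
    set s := (alphaLV a i v)⁻¹ with hsdef
    have hs1 : s ≤ 1 := inv_le_one_of_one_le₀ hcon
    have hspos : 0 < s := inv_pos.2 hpos
    set x := fun k => s * v k with hxdef
    have hx1 : alphaLV a i x = 1 := by
      rw [hxdef, alphaLV_smul]; exact inv_mul_cancel₀ hpos.ne'
    have hxle : ∀ k, x k ≤ v k := fun k => mul_le_of_le_one_left (hv0 k) hs1
    have hx0 : ∀ k, 0 ≤ x k := fun k => mul_nonneg hspos.le (hv0 k)
    have hj1 : 1 < alphaLV a j x :=
      h j hij.symm x (fun k => ⟨hx0 k, le_trans (hxle k) (hvi k)⟩) hx1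
    rcases hCj with h' | h'
    · have : alphaLV a j x ≤ alphaLV a j (projLV U (({j} : Set (Fin n))ᶜ)) :=
        alphaLV_mono hnn j (fun k => le_trans (hxle k) (hvj k))
      linarith
    · have hpos' : 0 < alphaLV a j x := by linarith
      set s' := (alphaLV a j x)⁻¹ with hs'def
      have hs'lt : s' < 1 := inv_lt_one_of_one_lt₀ hj1
      have hs'pos : 0 < s' := inv_pos.2 hpos'
      set y := fun k => s' * x k with hydef
      have hy1 : alphaLV a j y = 1 := by
        rw [hydef, alphaLV_smul]; exact inv_mul_cancel₀ hpos'.ne'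
      have hyle : ∀ k, y k ≤ x k := fun k => mul_le_of_le_one_left (hx0 k) hs'lt.le
      have hy0 : ∀ k, 0 ≤ y k := fun k => mul_nonneg hs'pos.le (hx0 k)
      have h1y : 1 < alphaLV a i y :=
        h' i hij y (fun k => ⟨hy0 k, le_trans (hyle k) (le_trans (hxle k) (hvj k))⟩) hy1
      have : alphaLV a i y = s' := by rw [hydef, alphaLV_smul, hx1, mul_one]
      linarith

end Aux

/-- Lemma 3.2(i): for `J ⊆ I_n` with `|J| > 1`, condition `(C_i)` for all `i ∈ J`
implies (3.7) for all `i, j ∈ J` with `i ≠ j`. -/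
theorem lemma3_2_i (n : ℕ) (hn : 2 ≤ n) (b : Fin n → ℝ) (a : Fin n → Fin n → ℝ)
    (hb : ∀ i, 0 < b i) (hdiag : ∀ i, 0 < a i i) (hnn : ∀ i j, 0 ≤ a i j)
    (J : Set (Fin n)) (hJ : 1 < J.ncard)
    (hC : ∀ i ∈ J, CondC a (Uvec a Set.univ) i) :
    ∀ i ∈ J, ∀ j ∈ J, i ≠ j → Cond37 a (Uvec a Set.univ) i j := by
  intro i hi j hj hij
  set U := Uvec a Set.univ with hUdef
  have hU : ∀ k, 0 ≤ U k := Uvec_nonneg hnn hdiag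
  have hCi := hC i hi
  have hCj := hC j hj
  set v := projLV U (({i, j} : Set (Fin n))ᶜ) with hvdef
  have hv0 : ∀ k, 0 ≤ v k := projLV_nonneg hU _
  have hvi : ∀ k, v k ≤ projLV U (({i} : Set (Fin n))ᶜ) k :=
    projLV_le hU (pair_compl_subset_left i j)
  have h1 : alphaLV a i v < 1 := lemB hnn hU hij hCi hCj
  have h2 : alphaLV a j v < 1 := by
    have := lemB hnn hU hij.symm hCj hCi
    rwa [Set.pair_comm] at this
  rw [Cond37]
  refine max_lt (by linarith) ?_
  by_contra hq
  push_neg at hq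
  have haij : 0 < a i j := by
    rcases (hnn i j).lt_or_eq with h | h
    · exact h
    · exfalso; rw [← h] at hq; simp at hq; linarith
  set t := (1 - alphaLV a i v) / a i j with ht
  have htpos : 0 < t := div_pos (by linarith) haij
  set p := fun k => v k + (if k = j then t else 0) with hpdef
  have hp0 : ∀ k, 0 ≤ p k := by
    intro k
    have : (0:ℝ) ≤ if k = j then t else 0 := by split_ifs; exacts [htpos.le, le_rfl]
    exact add_nonneg (hv0 k) this
  have hαip : alphaLV a i p = 1 := by
    rw [hpdef, alphaLV_add_single]
    have : a i j * t = 1 - alphaLV a i v := by rw [ht]; field_simp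
    rw [this]; ring
  have hαjp : alphaLV a j p ≤ 1 := by
    rw [hpdef, alphaLV_add_single]
    rw [div_mul_eq_mul_div, le_div_iff₀ (hdiag j)] at hq
    have : a j j * t ≤ 1 - alphaLV a j v := by
      rw [ht, mul_div_assoc', div_le_iff₀ haij]
      nlinarith [hq]
    linarith
  have hpj : p j ≤ U j := lemA hnn hdiag hij hp0 hαip.ge hαjp
  have hvj0 : v j = 0 := by simp [hvdef, projLV]
  have hple : ∀ k, p k ≤ projLV U (({i} : Set (Fin n))ᶜ) k := by
    intro k
    by_cases hk : k = j
    · subst hk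
      have : p k = t := by simp [hpdef, hvj0]
      rw [this]
      have : projLV U (({i} : Set (Fin n))ᶜ) k = U k := by
        simp [projLV, Ne.symm hij]
      rw [this]
      calc t = p k := by simp [hpdef, hvj0]
        _ ≤ U k := hpj
    · have : p k = v k := by simp [hpdef, hk]
      rw [this]; exact hvi k
  rcases hCi with h | h
  · have := alphaLV_mono hnn i hple
    rw [hαip] at this
    linarith
  · have := h j hij.symm p (fun k => ⟨hp0 k, hple k⟩) hαip
    linarith
end
end

section
/- Fix i ∈ I_n. If condition (3.7) holds for the pair (i,j) for every j ∈ I_n∖{i}, then condition (C_i) holds. -/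
open Filter Topology Set

noncomputable section

lemma alphaLV_split {n : ℕ} (a : Fin n → Fin n → ℝ) (U : Fin n → ℝ) {i m : Fin n}
    (hm : m ≠ i) (l : Fin n) :
    alphaLV a l (projLV U (({i} : Set (Fin n))ᶜ)) =
    alphaLV a l (projLV U (({i, m} : Set (Fin n))ᶜ)) + a l m * U m := by
  unfold alphaLV
  have hpt : ∀ k, a l k * projLV U (({i} : Set (Fin n))ᶜ) k =
      a l k * projLV U (({i, m} : Set (Fin n))ᶜ) k + (if k = m then a l m * U m else 0) := by
    intro k
    by_cases hk : k = m
    · subst hk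
      simp [projLV, hm, Set.mem_insert_iff]
    · by_cases hki : k = i
      · subst hki
        simp [projLV, hk, Set.mem_insert_iff]
      · simp [projLV, hk, hki, Set.mem_insert_iff]
  rw [Finset.sum_congr rfl (fun k _ => hpt k), Finset.sum_add_distrib,
    Finset.sum_ite_eq' Finset.univ m (fun _ => a l m * U m)]
  simp

lemma alphaLV_update_split {n : ℕ} (a : Fin n → Fin n → ℝ) (x : Fin n → ℝ) (l m : Fin n) :
    alphaLV a l x = alphaLV a l (Function.update x m 0) + a l m * x m := by
  unfold alphaLV
  have hpt : ∀ k, a l k * x k =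
      a l k * (Function.update x m 0 k) + (if k = m then a l m * x m else 0) := by
    intro k
    by_cases hk : k = m
    · subst hk; simp
    · simp [Function.update_of_ne hk, hk]
  rw [Finset.sum_congr rfl (fun k _ => hpt k), Finset.sum_add_distrib,
    Finset.sum_ite_eq' Finset.univ m (fun _ => a l m * x m)]
  simp

lemma Uvec_cases {n : ℕ} (a : Fin n → Fin n → ℝ) (hdiag : ∀ i, 0 < a i i)
    (hnn : ∀ i j, 0 ≤ a i j) (j : Fin n) (hpos : 0 < Uvec a Set.univ j) :
    Uvec a Set.univ j = (a j j)⁻¹ ∨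
    ((∀ m, m ≠ j → a m j < a j j ∧ 0 < a j m) ∧
     0 < 1 - a j j * Uvec a Set.univ j ∧
     ∀ m k, m ≠ j → k ≠ j →
       a m k * (1 - a j j * Uvec a Set.univ j) ≤ a j k * (1 - a m j * Uvec a Set.univ j)) := by
  by_cases hc1 : ∃ m ∈ (Set.univ : Set (Fin n)), m ≠ j ∧ (a j j ≤ a m j ∨ a j m = 0)
  · left
    rw [Uvec, if_pos hc1]
  right
  push_neg at hc1
  have hfacts : ∀ m, m ≠ j → a m j < a j j ∧ 0 < a j m := by
    intro m hm
    obtain ⟨h1, h2⟩ := hc1 m (Set.mem_univ m) hm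
    exact ⟨h1, lt_of_le_of_ne (hnn j m) (Ne.symm h2)⟩
  by_cases hc2 : (∀ m ∈ (Set.univ : Set (Fin n)), m ≠ j → a m j < a j j) ∧
      (∀ m ∈ (Set.univ : Set (Fin n)), ∀ k ∈ (Set.univ : Set (Fin n)), m ≠ j → k ≠ j → a m k ≤ a j k)
  · exfalso
    have : Uvec a Set.univ j = 0 := by
      rw [Uvec, if_neg (by push_neg; intro m _ hm; exact hc1 m (Set.mem_univ m) hm), if_pos hc2]
    rw [this] at hpos; exact lt_irrefl 0 hpos
  -- case 3
  set S : Set ℝ := {r | ∃ p ∈ (Set.univ : Set (Fin n)), ∃ q ∈ (Set.univ : Set (Fin n)),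
      p ≠ j ∧ q ≠ j ∧ a j p < a q p ∧
      r = (a q p - a j p) / (a j j * a q p - a j p * a q j)} with hS
  have hUj : Uvec a Set.univ j = sSup S := by
    rw [Uvec, if_neg (by push_neg; intro m _ hm; exact hc1 m (Set.mem_univ m) hm), if_neg hc2]
  have hSfin : S.Finite := by
    apply Set.Finite.subset (Set.finite_range
      (fun pq : Fin n × Fin n => (a pq.2 pq.1 - a j pq.1) /
        (a j j * a pq.2 pq.1 - a j pq.1 * a pq.2 j)))
    rintro r ⟨p, -, q, -, -, -, -, hr⟩
    exact ⟨(p, q), hr.symm⟩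
  have hSne : S.Nonempty := by
    push_neg at hc2
    obtain ⟨m, -, k, -, hm, hk, hlt⟩ := hc2 (fun m _ hm => (hfacts m hm).1)
    exact ⟨_, k, Set.mem_univ k, m, Set.mem_univ m, hk, hm, hlt, rfl⟩
  -- denominator positivity for any element data
  have hden : ∀ p q : Fin n, p ≠ j → q ≠ j → a j p < a q p →
      0 < a j j * a q p - a j p * a q j ∧
      a j j * (a q p - a j p) < a j j * a q p - a j p * a q j := by
    intro p q hp hq hlt
    have h1 : 0 < a j p := (hfacts p hp).2
    have h2 : a q j < a j j := (hfacts q hq).1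
    constructor <;> nlinarith [hdiag j, hnn q p]
  have hQ : 0 < 1 - a j j * Uvec a Set.univ j := by
    have hmem : sSup S ∈ S := hSne.csSup_mem hSfin
    obtain ⟨p, -, q, -, hp, hq, hlt, hr⟩ := hmem
    obtain ⟨hd1, hd2⟩ := hden p q hp hq hlt
    rw [hUj, hr, sub_pos,
      show a j j * ((a q p - a j p) / (a j j * a q p - a j p * a q j)) =
        a j j * (a q p - a j p) / (a j j * a q p - a j p * a q j) from
        (mul_div_assoc _ _ _).symm, div_lt_one hd1]
    linarith
  refine ⟨hfacts, hQ, ?_⟩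
  intro m k hm hk
  have hajk : 0 < a j k := (hfacts k hk).2
  have hamj : a m j < a j j := (hfacts m hm).1
  have hUnn : 0 ≤ Uvec a Set.univ j := le_of_lt hpos
  by_cases hlt : a j k < a m k
  · obtain ⟨hd1, -⟩ := hden k m hk hm hlt
    have hmem : (a m k - a j k) / (a j j * a m k - a j k * a m j) ∈ S :=
      ⟨k, Set.mem_univ k, m, Set.mem_univ m, hk, hm, hlt, rfl⟩
    have hle : (a m k - a j k) / (a j j * a m k - a j k * a m j) ≤ Uvec a Set.univ j := by
      rw [hUj]; exact le_csSup hSfin.bddAbove hmem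
    rw [div_le_iff₀ hd1] at hle
    nlinarith
  · push_neg at hlt
    calc a m k * (1 - a j j * Uvec a Set.univ j)
        ≤ a j k * (1 - a j j * Uvec a Set.univ j) := mul_le_mul_of_nonneg_right hlt hQ.le
      _ ≤ a j k * (1 - a m j * Uvec a Set.univ j) := by
          apply mul_le_mul_of_nonneg_left _ hajk.le
          nlinarith

lemma projLV_compl_singleton_self {n : ℕ} (U : Fin n → ℝ) (i : Fin n) :
    projLV U (({i} : Set (Fin n))ᶜ) i = 0 := by
  simp [projLV]

lemma projLV_compl_singleton_ne {n : ℕ} (U : Fin n → ℝ) {i k : Fin n} (hk : k ≠ i) :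
    projLV U (({i} : Set (Fin n))ᶜ) k = U k := by
  simp [projLV, hk]

/-- Lemma 3.2(ii): for a fixed `i`, condition (3.7) for all `j ≠ i` implies
condition `(C_i)`. -/
theorem lemma3_2_ii (n : ℕ) (hn : 2 ≤ n) (b : Fin n → ℝ) (a : Fin n → Fin n → ℝ)
    (hb : ∀ i, 0 < b i) (hdiag : ∀ i, 0 < a i i) (hnn : ∀ i j, 0 ≤ a i j)
    (i : Fin n) (h : ∀ j, j ≠ i → Cond37 a (Uvec a Set.univ) i j) :
    CondC a (Uvec a Set.univ) i := by
  set U : Fin n → ℝ := Uvec a Set.univ with hU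
  right
  intro j hj x hx hax
  have hxi : x i = 0 :=
    le_antisymm (by simpa [projLV_compl_singleton_self] using (hx i).2) (hx i).1
  have hxnn : ∀ k, 0 ≤ x k := fun k => (hx k).1
  have hxU : ∀ k, k ≠ i → x k ≤ U k := by
    intro k hk
    simpa [projLV_compl_singleton_ne U hk] using (hx k).2
  -- c_m > 0 for all m ≠ i
  have hc : ∀ m, m ≠ i → 0 < 1 - alphaLV a i (projLV U (({i, m} : Set (Fin n))ᶜ)) :=
    fun m hm => lt_of_le_of_lt (le_max_left _ _) (h m hm)
  -- nonnegativity of the projections used below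
  have hWnn : ∀ (m k : Fin n), 0 ≤ projLV U (({i, m} : Set (Fin n))ᶜ) k := by
    intro m k
    by_cases hk : k ∈ (({i, m} : Set (Fin n))ᶜ)
    · have hki : k ≠ i := fun hki => hk (by simp [hki])
      have : projLV U (({i, m} : Set (Fin n))ᶜ) k = U k := by simp [projLV, hk]
      rw [this]
      exact le_trans (hxnn k) (hxU k hki)
    · have : projLV U (({i, m} : Set (Fin n))ᶜ) k = 0 := by simp [projLV, hk]
      rw [this]
  -- key budget inequality
  have hkey : ∀ m, m ≠ i →
      1 - alphaLV a i (projLV U (({i, m} : Set (Fin n))ᶜ)) ≤ a i m * x m := by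
    intro m hm
    have hsplit := alphaLV_update_split a x i m
    have hle : alphaLV a i (Function.update x m 0) ≤
        alphaLV a i (projLV U (({i, m} : Set (Fin n))ᶜ)) := by
      unfold alphaLV
      apply Finset.sum_le_sum
      intro k _
      apply mul_le_mul_of_nonneg_left _ (hnn i k)
      by_cases hkm : k = m
      · subst hkm; simp [hWnn]
      · rw [Function.update_of_ne hkm]
        by_cases hki : k = i
        · rw [hki, hxi]
          exact hWnn m i
        · have : projLV U (({i, m} : Set (Fin n))ᶜ) k = U k := by
            simp [projLV, Set.mem_insert_iff, hki, hkm]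
          rw [this]
          exact hxU k hki
    rw [hax] at hsplit
    linarith
  -- positivity
  have hpos : ∀ m, m ≠ i → 0 < a i m ∧ 0 < x m ∧ 0 < U m := by
    intro m hm
    have h1 : 0 < a i m * x m := lt_of_lt_of_le (hc m hm) (hkey m hm)
    have him : 0 < a i m := by
      rcases (hnn i m).lt_or_eq with h2 | h2
      · exact h2
      · rw [← h2, zero_mul] at h1; exact absurd h1 (lt_irrefl 0)
    have hxm : 0 < x m := by
      by_contra h2
      push_neg at h2
      nlinarith
    exact ⟨him, hxm, lt_of_lt_of_le hxm (hxU m hm)⟩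
  -- the max-ratio index M
  obtain ⟨M, hMmem, hMmax⟩ := Finset.exists_max_image (Finset.univ.erase i)
    (fun k => a j k / a i k) ⟨j, Finset.mem_erase.mpr ⟨hj, Finset.mem_univ j⟩⟩
  have hMi : M ≠ i := (Finset.mem_erase.mp hMmem).1
  have haiM : 0 < a i M := (hpos M hMi).1
  have haij : 0 < a i j := (hpos j hj).1
  have hrj : a j j / a i j ≤ a j M / a i M :=
    hMmax j (Finset.mem_erase.mpr ⟨hj, Finset.mem_univ j⟩)
  have hrpos : 0 < a j M / a i M := lt_of_lt_of_le (div_pos (hdiag j) haij) hrj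
  have hrmax : ∀ k, k ≠ i → a j k ≤ a j M / a i M * a i k := by
    intro k hk
    have h1 := hMmax k (Finset.mem_erase.mpr ⟨hk, Finset.mem_univ k⟩)
    have hik := (hpos k hk).1
    calc a j k = a j k / a i k * a i k := by field_simp
      _ ≤ a j M / a i M * a i k := mul_le_mul_of_nonneg_right h1 hik.le
  have hrM : a j M / a i M * a i M = a j M := div_mul_cancel₀ _ (ne_of_gt haiM)
  -- main pointwise inequality
  set V : Fin n → ℝ := projLV U (({i} : Set (Fin n))ᶜ) with hV
  have hViz : V i = 0 := projLV_compl_singleton_self U i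
  have hmain : a j M / a i M * (1 - alphaLV a i V) + alphaLV a j V ≤ alphaLV a j x := by
    have hterm : ∀ k ∈ Finset.univ,
        a j M / a i M * (a i k * x k) - (a j M / a i M * (a i k * V k) - a j k * V k)
          ≤ a j k * x k := by
      intro k _
      by_cases hk : k = i
      · subst hk
        rw [hxi, hViz]
        ring_nf
        exact le_refl _
      · have h1 : a j k ≤ a j M / a i M * a i k := hrmax k hk
        have h2 : x k ≤ V k := by
          rw [hV, projLV_compl_singleton_ne U hk]
          exact hxU k hk
        nlinarith [hxnn k]
    have hsum := Finset.sum_le_sum hterm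
    have hlhs : ∑ k, (a j M / a i M * (a i k * x k) -
        (a j M / a i M * (a i k * V k) - a j k * V k))
        = a j M / a i M * alphaLV a i x -
          (a j M / a i M * alphaLV a i V - alphaLV a j V) := by
      unfold alphaLV
      rw [Finset.mul_sum, Finset.mul_sum, ← Finset.sum_sub_distrib, ← Finset.sum_sub_distrib]
    rw [hlhs, hax] at hsum
    unfold alphaLV at hsum ⊢
    linarith
  -- reduction to the M-centred form
  have hsplitI := alphaLV_split a U hMi i
  have hsplitJ := alphaLV_split a U hMi j
  rw [← hV] at hsplitI hsplitJ
  have hsplitI' : a j M / a i M * alphaLV a i V =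
      a j M / a i M * alphaLV a i (projLV U (({i, M} : Set (Fin n))ᶜ)) +
      a j M / a i M * (a i M * U M) := by rw [hsplitI]; ring
  have hrM' : a j M / a i M * (a i M * U M) = a j M * U M := by
    rw [← mul_assoc, hrM]
  -- the crucial estimate
  have hgoal : 1 < a j M / a i M * (1 - alphaLV a i (projLV U (({i, M} : Set (Fin n))ᶜ)))
      + alphaLV a j (projLV U (({i, M} : Set (Fin n))ᶜ)) := by
    rcases eq_or_ne M j with hMj | hMj
    · -- use condition (3.7) for the pair (i, j)
      rw [hMj]
      have hcond : a i j / a j j *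
          (1 - alphaLV a j (projLV U (({i, j} : Set (Fin n))ᶜ))) <
          1 - alphaLV a i (projLV U (({i, j} : Set (Fin n))ᶜ)) :=
        lt_of_le_of_lt (le_max_right _ _) (h j hj)
      have hcj := hc j hj
      rw [div_mul_eq_mul_div, div_lt_iff₀ (hdiag j)] at hcond
      have h2 : 1 - alphaLV a j (projLV U (({i, j} : Set (Fin n))ᶜ)) <
          a j j / a i j * (1 - alphaLV a i (projLV U (({i, j} : Set (Fin n))ᶜ))) := by
        rw [div_mul_eq_mul_div, lt_div_iff₀ haij]
        nlinarith
      have hrj' : a j j / a i j ≤ a j j / a i j := le_refl _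
      linarith
    · -- M ≠ j : use the structure of Uvec at j
      have hUjpos : 0 < U j := (hpos j hj).2.2
      have hjM : j ≠ M := fun hh => hMj hh.symm
      have hWmj : projLV U (({i, M} : Set (Fin n))ᶜ) j = U j := by
        simp [projLV, Set.mem_insert_iff, hj, hjM]
      rcases Uvec_cases a hdiag hnn j (hU ▸ hUjpos) with hcase1 | ⟨hfacts, hQ, hprop⟩
      · -- U j = (a j j)⁻¹  :  the sum alone is at least 1
        rw [← hU] at hcase1
        have h1 : 0 < a j M / a i M *
            (1 - alphaLV a i (projLV U (({i, M} : Set (Fin n))ᶜ))) :=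
          mul_pos hrpos (hc M hMi)
        have h2 : a j j * projLV U (({i, M} : Set (Fin n))ᶜ) j ≤
            alphaLV a j (projLV U (({i, M} : Set (Fin n))ᶜ)) := by
          unfold alphaLV
          exact Finset.single_le_sum
            (fun k _ => mul_nonneg (hnn j k) (hWnn M k)) (Finset.mem_univ j)
        rw [hWmj, hcase1, mul_inv_cancel₀ (ne_of_gt (hdiag j))] at h2
        linarith
      · -- the sSup case
        rw [← hU] at hQ hprop
        have hajj_gt : a i j < a j j := (hfacts i (Ne.symm hj)).1
        have hP : 0 < 1 - a i j * U j := by nlinarith [hUjpos.le]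
        have hPr : 1 - a j j * U j < (1 - a i j * U j) * (a j M / a i M) := by
          have h5 : (1 - a j j * U j) * a i j < (1 - a i j * U j) * a j j := by nlinarith
          have h6 : 1 - a j j * U j < (1 - a i j * U j) * (a j j / a i j) := by
            rw [mul_div_assoc', lt_div_iff₀ haij]
            linarith
          calc 1 - a j j * U j < (1 - a i j * U j) * (a j j / a i j) := h6
            _ ≤ (1 - a i j * U j) * (a j M / a i M) :=
                mul_le_mul_of_nonneg_left hrj hP.le
        -- sum estimate: P * α_j Wm ≥ P * a_jj * U_j + Q * (α_i Wm - a_ij * U_j)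
        have hsum1 : ∀ k ∈ Finset.univ,
            (if k = j then (1 - a i j * U j) * (a j j * U j)
              else (1 - a j j * U j) * (a i k * projLV U (({i, M} : Set (Fin n))ᶜ) k))
            ≤ (1 - a i j * U j) * (a j k * projLV U (({i, M} : Set (Fin n))ᶜ) k) := by
          intro k _
          by_cases hk : k = j
          · subst hk
            rw [if_pos rfl, hWmj]
          · rw [if_neg hk]
            have := hprop i k (Ne.symm hj) hk
            nlinarith [hWnn M k]
        have hsum2 : ∑ k, (if k = j then (1 - a i j * U j) * (a j j * U j)
              else (1 - a j j * U j) * (a i k * projLV U (({i, M} : Set (Fin n))ᶜ) k))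
            = (1 - a i j * U j) * (a j j * U j)
              + ((1 - a j j * U j) * alphaLV a i (projLV U (({i, M} : Set (Fin n))ᶜ))
                - (1 - a j j * U j) * (a i j * U j)) := by
          have hpt : ∀ k, (if k = j then (1 - a i j * U j) * (a j j * U j)
              else (1 - a j j * U j) * (a i k * projLV U (({i, M} : Set (Fin n))ᶜ) k))
              = (1 - a j j * U j) * (a i k * projLV U (({i, M} : Set (Fin n))ᶜ) k)
                + (if k = j then (1 - a i j * U j) * (a j j * U j)
                    - (1 - a j j * U j) * (a i j * U j) else 0) := by
            intro k
            by_cases hk : k = j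
            · subst hk
              rw [if_pos rfl, if_pos rfl, hWmj]
              ring
            · rw [if_neg hk, if_neg hk, add_zero]
          rw [Finset.sum_congr rfl (fun k _ => hpt k), Finset.sum_add_distrib,
            Finset.sum_ite_eq' Finset.univ j]
          simp only [Finset.mem_univ, if_true]
          have hms : (1 - a j j * U j) * alphaLV a i (projLV U (({i, M} : Set (Fin n))ᶜ))
              = ∑ k, (1 - a j j * U j) *
                  (a i k * projLV U (({i, M} : Set (Fin n))ᶜ) k) := by
            unfold alphaLV
            rw [Finset.mul_sum]
          rw [hms]
          ring
        have hsum3 : (1 - a i j * U j) * (a j j * U j)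
              + ((1 - a j j * U j) * alphaLV a i (projLV U (({i, M} : Set (Fin n))ᶜ))
                - (1 - a j j * U j) * (a i j * U j))
            ≤ (1 - a i j * U j) * alphaLV a j (projLV U (({i, M} : Set (Fin n))ᶜ)) := by
          rw [← hsum2]
          calc _ ≤ ∑ k, (1 - a i j * U j) *
              (a j k * projLV U (({i, M} : Set (Fin n))ᶜ) k) := Finset.sum_le_sum hsum1
            _ = _ := by unfold alphaLV; rw [Finset.mul_sum]
        -- conclude by multiplying the goal through by P > 0
        have hcM := hc M hMi
        rw [← mul_lt_mul_iff_right₀ hP]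
        nlinarith [mul_pos (sub_pos.mpr hPr) hcM]
  linarith [hmain, hsplitI', hsplitJ, hrM', hgoal]
end
end

section
/- Assume that for each i ∈ I_n, every equilibrium of the system lying on π_i is below γ_i (i.e. every u ∈ ℝ^n_+ with u_i = 0 at which the vector field vanishes satisfies α_i u < 1). Then there exists a unique equilibrium x* with x*_i > 0 for all i ∈ I_n, and it satisfies x*_i ≤ 1/a_{ii} for all i. -/
open Filter Topology Set

noncomputable section

private lemma alphaLV_add_smul {n : ℕ} (a : Fin n → Fin n → ℝ) (i : Fin n)
    (x d : Fin n → ℝ) (s : ℝ) :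
    alphaLV a i (fun k => x k + s * d k) = alphaLV a i x + s * alphaLV a i d := by
  simp only [alphaLV, Finset.mul_sum, ← Finset.sum_add_distrib]
  exact Finset.sum_congr rfl fun k _ => by ring

private lemma alphaLV_single {n : ℕ} (a : Fin n → Fin n → ℝ) (i j : Fin n) :
    alphaLV a i (fun k => if k = j then (1:ℝ) else 0) = a i j := by
  simp [alphaLV, mul_ite, mul_one, mul_zero, Finset.sum_ite_eq']

/-- Existence of a sub-equilibrium supported and positive exactly on any finite set `S`. -/
private lemma exists_subEq {n : ℕ} (b : Fin n → ℝ) (a : Fin n → Fin n → ℝ)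
    (hdiag : ∀ i, 0 < a i i) (hnn : ∀ i j, 0 ≤ a i j)
    (h : ∀ i : Fin n, ∀ u : Fin n → ℝ,
      IsLVEquilibrium b a u → u i = 0 → alphaLV a i u < 1) :
    ∀ S : Finset (Fin n), ∃ x : Fin n → ℝ,
      (∀ i, 0 ≤ x i) ∧ (∀ i, i ∉ S → x i = 0) ∧
      (∀ i ∈ S, 0 < x i) ∧ (∀ i ∈ S, alphaLV a i x = 1) := by
  intro S
  induction S using Finset.strongInductionOn with
  | _ S IH =>
  classical
  set c : Fin n → ℝ := fun i => if i ∈ S then ((n:ℝ) + 2) / a i i else 0 with hc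
  have hc0 : ∀ i, 0 ≤ c i := fun i => by
    by_cases hi : i ∈ S
    · simp only [hc, if_pos hi]; exact div_nonneg (by positivity) (hdiag i).le
    · simp [hc, hi]
  set K : Set (Fin n → ℝ) := Set.pi Set.univ (fun i => Set.Icc 0 (c i)) with hKdef
  have hKc : IsCompact K := isCompact_univ_pi fun i => isCompact_Icc
  have hzero : (fun _ => (0:ℝ)) ∈ K := fun i _ => ⟨le_refl _, hc0 i⟩
  set f : (Fin n → ℝ) → ℝ := fun x => ∑ i ∈ S, (alphaLV a i x - 1)^2 with hfdef
  have hfc : Continuous f := by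
    apply continuous_finset_sum
    intro i _
    have hα : Continuous fun x : Fin n → ℝ => alphaLV a i x := by
      apply continuous_finset_sum; intro j _
      exact continuous_const.mul (continuous_apply j)
    exact (hα.sub continuous_const).pow 2
  obtain ⟨x, hxK, hxmin'⟩ := hKc.exists_isMinOn ⟨_, hzero⟩ hfc.continuousOn
  have hxmin : ∀ y ∈ K, f x ≤ f y := fun y hy => hxmin' hy
  have hx0 : ∀ i, 0 ≤ x i := fun i => (hxK i (Set.mem_univ i)).1
  have hxc : ∀ i, x i ≤ c i := fun i => (hxK i (Set.mem_univ i)).2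
  have hxS0 : ∀ i, i ∉ S → x i = 0 := fun i hi =>
    le_antisymm (by simpa [hc, if_neg hi] using hxc i) (hx0 i)
  set r : Fin n → ℝ := fun i => alphaLV a i x - 1 with hrdef
  set D : Fin n → ℝ := fun j => ∑ i ∈ S, r i * a i j with hDdef
  have hfcard : f x ≤ (S.card : ℝ) := by
    have h0 : f (fun _ => 0) = (S.card : ℝ) := by
      simp [hfdef, alphaLV]
    calc f x ≤ f (fun _ => 0) := hxmin _ hzero
      _ = _ := h0
  have hcardn : (S.card : ℝ) ≤ (n : ℝ) := by
    have h1 : S.card ≤ n := le_trans (Finset.card_le_univ S) (le_of_eq (Finset.card_fin n))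
    exact_mod_cast h1
  have hxlt : ∀ j ∈ S, x j < c j := by
    intro j hj
    rcases lt_or_eq_of_le (hxc j) with hlt | heq
    · exact hlt
    · exfalso
      have hdj : a j j * x j ≤ alphaLV a j x := by
        have := Finset.single_le_sum (f := fun k => a j k * x k)
          (fun k _ => mul_nonneg (hnn j k) (hx0 k)) (Finset.mem_univ j)
        simpa [alphaLV] using this
      have hcj : a j j * c j = (n:ℝ) + 2 := by
        simp only [hc, if_pos hj]
        rw [mul_comm, div_mul_cancel₀ _ (hdiag j).ne']
      have hxj : a j j * x j = (n:ℝ) + 2 := by rw [heq, hcj]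
      have hrj : ((n:ℝ) + 1) ≤ r j := by
        simp only [hrdef]; linarith
      have hsq : ((n:ℝ)+1)^2 ≤ f x := by
        have h1 : (r j)^2 ≤ ∑ i ∈ S, (r i)^2 :=
          Finset.single_le_sum (f := fun i => (r i)^2) (fun i _ => sq_nonneg _) hj
        have h2 : f x = ∑ i ∈ S, (r i)^2 := by
          simp only [hfdef, hrdef]
        nlinarith [hrj, h1]
      nlinarith [hfcard, hsq, hcardn, Nat.cast_nonneg (α := ℝ) n]
  have hpert : ∀ j ∈ S, ∀ s : ℝ, 0 ≤ x j + s → x j + s ≤ c j →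
      0 ≤ s * (2 * D j + s * ∑ i ∈ S, (a i j)^2) := by
    intro j hj s hs1 hs2
    set y : Fin n → ℝ := fun k => x k + s * (if k = j then 1 else 0) with hy
    have hyK : y ∈ K := by
      intro k _
      by_cases hk : k = j
      · subst hk
        show x k + s * (if k = k then (1:ℝ) else 0) ∈ Set.Icc 0 (c k)
        rw [if_pos rfl, mul_one]; exact ⟨hs1, hs2⟩
      · show x k + s * (if k = j then (1:ℝ) else 0) ∈ Set.Icc 0 (c k)
        rw [if_neg hk, mul_zero, add_zero]; exact ⟨hx0 k, hxc k⟩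
    have hαy : ∀ i, alphaLV a i y = alphaLV a i x + s * a i j := by
      intro i
      have h1 := alphaLV_add_smul a i x (fun k => if k = j then 1 else 0) s
      simp only [hy]
      rw [h1, alphaLV_single]
    have hfy : f y = f x + s * (2 * D j + s * ∑ i ∈ S, (a i j)^2) := by
      have hcong : ∀ i ∈ S, (alphaLV a i y - 1)^2
          = (r i)^2 + (2*s) * (r i * a i j) + s^2 * (a i j)^2 := by
        intro i _; rw [hαy i]; simp only [hrdef]; ring
      simp only [hfdef]
      rw [Finset.sum_congr rfl hcong]
      rw [Finset.sum_add_distrib, Finset.sum_add_distrib, ← Finset.mul_sum, ← Finset.mul_sum]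
      have h2 : ∀ i ∈ S, (alphaLV a i x - 1)^2 = (r i)^2 := fun i _ => by
        simp only [hrdef]
      rw [Finset.sum_congr rfl h2]
      simp only [hDdef]
      ring
    have hmin := hxmin y hyK
    linarith [hfy, hmin]
  have hE0 : ∀ j, 0 ≤ ∑ i ∈ S, (a i j)^2 :=
    fun j => Finset.sum_nonneg fun i _ => sq_nonneg _
  have hD0 : ∀ j ∈ S, 0 ≤ D j := by
    intro j hj
    by_contra hcon
    push_neg at hcon
    set E := ∑ i ∈ S, (a i j)^2 with hE
    set s := min (c j - x j) (-(D j) / (E + 1)) with hs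
    have hspos : 0 < s := by
      apply lt_min
      · linarith [hxlt j hj]
      · exact div_pos (by linarith) (by linarith [hE0 j])
    have hsle : s ≤ -(D j) / (E + 1) := min_le_right _ _
    have hsE : s * E ≤ -(D j) := by
      have h1 : s * E ≤ (-(D j) / (E + 1)) * E :=
        mul_le_mul_of_nonneg_right hsle (hE0 j)
      have h2 : (-(D j) / (E + 1)) * E ≤ -(D j) := by
        rw [div_mul_eq_mul_div, div_le_iff₀ (by linarith [hE0 j] : (0:ℝ) < E + 1)]
        nlinarith [hE0 j]
      linarith
    have hq := hpert j hj s (by linarith [hx0 j])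
      (by have := min_le_left (c j - x j) (-(D j)/(E+1)); linarith)
    have h3 : 2 * D j + s * E ≤ D j := by linarith
    have h4 : s * (2 * D j + s * E) ≤ s * D j := mul_le_mul_of_nonneg_left h3 hspos.le
    have h5 : s * D j < 0 := mul_neg_of_pos_of_neg hspos hcon
    linarith [hq]
  have hDle : ∀ j ∈ S, 0 < x j → D j ≤ 0 := by
    intro j hj hxj
    by_contra hcon
    push_neg at hcon
    set E := ∑ i ∈ S, (a i j)^2 with hE
    set s := min (x j) (D j / (E + 1)) with hs
    have hspos : 0 < s := lt_min hxj (div_pos hcon (by linarith [hE0 j]))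
    have hsle : s ≤ D j / (E+1) := min_le_right _ _
    have hsE : s * E ≤ D j := by
      have h1 : s * E ≤ (D j / (E+1)) * E := mul_le_mul_of_nonneg_right hsle (hE0 j)
      have h2 : (D j / (E+1)) * E ≤ D j := by
        rw [div_mul_eq_mul_div, div_le_iff₀ (by linarith [hE0 j] : (0:ℝ) < E + 1)]
        nlinarith [hE0 j, hcon.le]
      linarith
    have hq := hpert j hj (-s) (by linarith [min_le_left (x j) (D j/(E+1))])
      (by linarith [hxc j])
    have h3 : D j ≤ 2 * D j + (-s) * E := by nlinarith
    have h4 : (-s) * (2 * D j + (-s) * E) ≤ (-s) * D j :=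
      mul_le_mul_of_nonpos_left h3 (by linarith)
    have h5 : (-s) * D j < 0 := mul_neg_of_neg_of_pos (by linarith) hcon
    linarith [hq]
  have hxD : ∀ j, x j * D j = 0 := by
    intro j
    by_cases hj : j ∈ S
    · rcases (hx0 j).lt_or_eq with hpos | hzero'
      · rw [le_antisymm (hDle j hj hpos) (hD0 j hj), mul_zero]
      · rw [← hzero', zero_mul]
    · rw [hxS0 j hj, zero_mul]
  have swap : ∀ v : Fin n → ℝ, ∑ i ∈ S, r i * alphaLV a i v = ∑ j, v j * D j := by
    intro v
    simp only [alphaLV, Finset.mul_sum, hDdef]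
    rw [Finset.sum_comm]
    refine Finset.sum_congr rfl fun j _ => ?_
    exact Finset.sum_congr rfl fun i _ => by ring
  have key1 : ∑ i ∈ S, r i * alphaLV a i x = 0 := by
    rw [swap x]
    exact Finset.sum_eq_zero fun j _ => hxD j
  have key2 : ∑ i ∈ S, (r i)^2 = - ∑ i ∈ S, r i := by
    have hcong : ∀ i ∈ S, (r i)^2 = r i * alphaLV a i x - r i := fun i _ => by
      simp only [hrdef]; ring
    rw [Finset.sum_congr rfl hcong, Finset.sum_sub_distrib, key1, zero_sub]
  have hr0 : ∀ i ∈ S, r i = 0 := by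
    by_contra hcon
    push_neg at hcon
    obtain ⟨i0, hi0S, hi0⟩ := hcon
    have hpossum : 0 < ∑ i ∈ S, (r i)^2 :=
      Finset.sum_pos' (fun i _ => sq_nonneg _) ⟨i0, hi0S, pow_two_pos_of_ne_zero hi0⟩
    have hsumneg : ∑ i ∈ S, r i < 0 := by linarith [key2]
    have hNne : ∃ i ∈ S, 0 < r i := by
      by_contra hN
      push_neg at hN
      obtain ⟨j, hjS, hjneg⟩ : ∃ j ∈ S, r j < 0 := by
        by_contra hZ; push_neg at hZ
        have hz : ∀ i ∈ S, r i = 0 := fun i hi => le_antisymm (hN i hi) (hZ i hi)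
        have : ∑ i ∈ S, r i = 0 := Finset.sum_eq_zero hz
        linarith
      have hDj : D j < 0 := by
        have hle : D j ≤ r j * a j j := by
          simp only [hDdef]
          calc ∑ i ∈ S, r i * a i j
              ≤ ∑ i ∈ S, (if i = j then r j * a j j else 0) := by
                apply Finset.sum_le_sum
                intro i hi
                by_cases hij : i = j
                · subst hij; simp
                · simp only [if_neg hij]
                  exact mul_nonpos_of_nonpos_of_nonneg (hN i hi) (hnn i j)
            _ = r j * a j j := by
                rw [Finset.sum_ite_eq' S j (fun _ => r j * a j j), if_pos hjS]
        exact lt_of_le_of_lt hle (mul_neg_of_neg_of_pos hjneg (hdiag j))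
      exact absurd (hD0 j hjS) (not_le.mpr hDj)
    obtain ⟨i1, hi1S, hi1pos⟩ := hNne
    set P : Finset (Fin n) := S.filter (fun i => r i < 0) with hP
    have hPsub : P ⊆ S := Finset.filter_subset _ _
    have hPS : P ⊂ S := by
      refine (Finset.ssubset_iff_of_subset hPsub).mpr ?_
      refine ⟨i1, hi1S, ?_⟩
      simp only [hP, Finset.mem_filter]
      push_neg
      intro _
      linarith
    obtain ⟨w, hw0, hwout, hwpos, hwα⟩ := IH P hPS
    have hweq : IsLVEquilibrium b a w := by
      refine ⟨hw0, fun i => ?_⟩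
      by_cases hi : i ∈ P
      · rw [hwα i hi]; ring
      · rw [hwout i hi]; ring
    have hup : ∑ i ∈ S, r i * alphaLV a i w < ∑ i ∈ S, r i := by
      apply Finset.sum_lt_sum
      · intro i hi
        rcases lt_trichotomy (r i) 0 with hneg | hzero' | hposr
        · have hiP : i ∈ P := by simp only [hP, Finset.mem_filter]; exact ⟨hi, hneg⟩
          rw [hwα i hiP, mul_one]
        · rw [hzero', zero_mul]
        · have hiP : i ∉ P := by
            simp only [hP, Finset.mem_filter]; push_neg; intro _; linarith
          have hwi : w i = 0 := hwout i hiP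
          have hlt := h i w hweq hwi
          nlinarith [hposr, hlt]
      · refine ⟨i1, hi1S, ?_⟩
        have hiP : i1 ∉ P := by
          simp only [hP, Finset.mem_filter]; push_neg; intro _; linarith
        have hwi : w i1 = 0 := hwout i1 hiP
        have hlt := h i1 w hweq hwi
        nlinarith [hi1pos, hlt]
    have hdown : 0 ≤ ∑ i ∈ S, r i * alphaLV a i w := by
      rw [swap w]
      apply Finset.sum_nonneg
      intro j _
      by_cases hj : j ∈ S
      · exact mul_nonneg (hw0 j) (hD0 j hj)
      · rw [hwout j (fun hjP => hj (hPsub hjP)), zero_mul]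
    linarith [hsumneg, hup, hdown]
  have hαx : ∀ i ∈ S, alphaLV a i x = 1 := fun i hi => by
    have := hr0 i hi; simp only [hrdef] at this; linarith
  have hxeq : IsLVEquilibrium b a x := by
    refine ⟨hx0, fun i => ?_⟩
    by_cases hi : i ∈ S
    · rw [hαx i hi]; ring
    · rw [hxS0 i hi]; ring
  refine ⟨x, hx0, hxS0, fun i hi => ?_, hαx⟩
  rcases (hx0 i).lt_or_eq with hpos | hzero'
  · exact hpos
  · exfalso
    have hlt := h i x hxeq hzero'.symm
    rw [hαx i hi] at hlt
    exact lt_irrefl _ hlt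

/-- If `u` is a positive point with `α ≡ 1` and `v` a nonnegative point with `α ≡ 1`,
then `u ≤ v`. -/
private lemma le_of_pos_eq {n : ℕ} (b : Fin n → ℝ) (a : Fin n → Fin n → ℝ)
    (h : ∀ i : Fin n, ∀ u : Fin n → ℝ,
      IsLVEquilibrium b a u → u i = 0 → alphaLV a i u < 1)
    (u v : Fin n → ℝ) (hu : ∀ i, 0 < u i) (hαu : ∀ i, alphaLV a i u = 1)
    (hv : ∀ i, 0 ≤ v i) (hαv : ∀ i, alphaLV a i v = 1) :
    ∀ k, u k ≤ v k := by
  by_contra hc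
  push_neg at hc
  obtain ⟨k0, hk0⟩ := hc
  classical
  set T : Finset (Fin n) := Finset.univ.filter (fun k => v k < u k) with hT
  have hTne : T.Nonempty := ⟨k0, by simp [hT, hk0]⟩
  obtain ⟨k1, hk1T, hk1min⟩ := T.exists_min_image (fun k => u k / (u k - v k)) hTne
  have hk1 : v k1 < u k1 := by
    have := hk1T
    simp only [hT, Finset.mem_filter] at this
    exact this.2
  set t := u k1 / (u k1 - v k1) with ht
  have htpos : 0 < t := div_pos (hu k1) (by linarith)
  set z : Fin n → ℝ := fun k => u k + t * (v k - u k) with hz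
  have hαz : ∀ i, alphaLV a i z = 1 := by
    intro i
    have hsub : alphaLV a i (fun k => v k - u k) = alphaLV a i v - alphaLV a i u := by
      simp only [alphaLV, ← Finset.sum_sub_distrib]
      exact Finset.sum_congr rfl fun k _ => by ring
    have h1 := alphaLV_add_smul a i u (fun k => v k - u k) t
    simp only [hz]
    rw [h1, hsub, hαu, hαv]
    ring
  have hz0 : ∀ k, 0 ≤ z k := by
    intro k
    by_cases hk : v k < u k
    · have hkT : k ∈ T := by simp [hT, hk]
      have hmin := hk1min k hkT
      have hne : 0 < u k - v k := by linarith
      have h1 : t * (u k - v k) ≤ u k := (le_div_iff₀ hne).mp hmin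
      have h2 : t * (v k - u k) = -(t * (u k - v k)) := by ring
      simp only [hz]
      linarith
    · push_neg at hk
      have h1 : 0 ≤ t * (v k - u k) := mul_nonneg htpos.le (by linarith)
      simp only [hz]
      linarith [hu k]
  have hzk1 : z k1 = 0 := by
    have hne : u k1 - v k1 ≠ 0 := by linarith
    simp only [hz, ht]
    have h1 : (v k1 - u k1) = -(u k1 - v k1) := by ring
    rw [h1, mul_neg, div_mul_cancel₀ _ hne]
    ring
  have hzeq : IsLVEquilibrium b a z := ⟨hz0, fun i => by rw [hαz i]; ring⟩
  have hlt := h k1 z hzeq hzk1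
  rw [hαz k1] at hlt
  exact lt_irrefl _ hlt

/-- Lemma 5.1: if for each `i` every equilibrium on `π_i` is below `γ_i`, then there
is a unique equilibrium `x*` with all components positive, and `x*_i ≤ 1/a_{ii}`. -/
theorem lemma5_1 (n : ℕ) (hn : 2 ≤ n) (b : Fin n → ℝ) (a : Fin n → Fin n → ℝ)
    (hb : ∀ i, 0 < b i) (hdiag : ∀ i, 0 < a i i) (hnn : ∀ i j, 0 ≤ a i j)
    (h : ∀ i : Fin n, ∀ u : Fin n → ℝ,
      IsLVEquilibrium b a u → u i = 0 → alphaLV a i u < 1) :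
    ∃ xs : Fin n → ℝ,
      (IsLVEquilibrium b a xs ∧ (∀ i, 0 < xs i) ∧ (∀ i, xs i ≤ (a i i)⁻¹)) ∧
      ∀ y : Fin n → ℝ, IsLVEquilibrium b a y → (∀ i, 0 < y i) → y = xs := by
  obtain ⟨x, hx0, -, hxpos, hxα⟩ := exists_subEq b a hdiag hnn h Finset.univ
  have hxpos' : ∀ i, 0 < x i := fun i => hxpos i (Finset.mem_univ i)
  have hxα' : ∀ i, alphaLV a i x = 1 := fun i => hxα i (Finset.mem_univ i)
  have hxeq : IsLVEquilibrium b a x := ⟨hx0, fun i => by rw [hxα' i]; ring⟩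
  refine ⟨x, ⟨hxeq, hxpos', fun i => ?_⟩, fun y hyeq hypos => ?_⟩
  · have h1 : a i i * x i ≤ alphaLV a i x := by
      have := Finset.single_le_sum (f := fun j => a i j * x j)
        (fun j _ => mul_nonneg (hnn i j) (hx0 j)) (Finset.mem_univ i)
      simpa [alphaLV] using this
    rw [hxα' i] at h1
    rw [← one_div, le_div_iff₀ (hdiag i)]
    nlinarith [h1]
  · have hyα : ∀ i, alphaLV a i y = 1 := by
      intro i
      have h2 := hyeq.2 i
      have h3 : 1 - alphaLV a i y = 0 := by
        rcases mul_eq_zero.mp h2 with h4 | h4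
        · rcases mul_eq_zero.mp h4 with h5 | h5
          · exact absurd h5 (hb i).ne'
          · exact absurd h5 (hypos i).ne'
        · exact h4
      linarith
    funext k
    exact le_antisymm
      (le_of_pos_eq b a h y x hypos hyα hx0 hxα' k)
      (le_of_pos_eq b a h x y hxpos' hxα' (fun i => (hypos i).le) hyα k)
end
end
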